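/- arXiv:2204.08021 — 10 statements merged into one kernel-verified Lean document; each statement's English description precedes it below -/
import Mathlib

section
/- Let f(t) = (1/t) · ln((t + 18)/8.5) for t > 0. Then f''(t) > 0 for all t > 0, i.e., f is strictly convex on (0, ∞). -/
open Real

lemma log_lb_small (u : ℝ) (hu : 18 ≤ u) : 1 - 8.5 / u ≤ Real.log (u / 8.5) := by
  have hu0 : 0 < u := by linarith
  have h : Real.log (8.5 / u) ≤ 8.5 / u - 1 :=
    Real.log_le_sub_one_of_pos (by positivity)
  have h2 : Real.log (u / 8.5) = - Real.log (8.5 / u) := by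
    rw [← Real.log_inv]; norm_num
  linarith [h2 ▸ neg_le_neg h]

lemma log_lb_big (u : ℝ) (hu : 40 ≤ u) : (3:ℝ)/2 ≤ Real.log (u / 8.5) := by
  have h1 : Real.exp (3/2) < 40 / 8.5 := by
    have h2 : Real.exp (3/2) * Real.exp (3/2) = (Real.exp 1)^3 := by
      rw [← Real.exp_add, show (3:ℝ)/2 + 3/2 = 1+1+1 by norm_num,
        Real.exp_add, Real.exp_add]; ring
    have hc : (Real.exp 1)^3 < 2.7182818286^3 :=
      pow_lt_pow_left₀ Real.exp_one_lt_d9 (Real.exp_pos 1).le (by norm_num)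
    nlinarith [hc, Real.exp_pos ((3:ℝ)/2)]
  have h3 : Real.exp (3/2) < u / 8.5 := by
    apply h1.trans_le; rw [div_le_div_iff₀] <;> norm_num <;> linarith
  have := (Real.lt_log_iff_exp_lt (by positivity)).2 h3
  linarith

lemma key_ineq (u : ℝ) (hu : 18 ≤ u) : 3*(u-18)*(u-6) < 2*u^2 * Real.log (u/8.5) := by
  rcases le_or_gt u 40 with h | h
  · have hl := log_lb_small u hu
    have hu0 : (0:ℝ) < u := by linarith
    have h2 : 2*u^2 * (1 - 8.5/u) ≤ 2*u^2 * Real.log (u/8.5) :=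
      mul_le_mul_of_nonneg_left hl (by positivity)
    have h3 : 2*u^2 * (1 - 8.5/u) = 2*u^2 - 17*u := by field_simp; ring
    nlinarith [mul_nonneg (sub_nonneg.2 hu) (sub_nonneg.2 h)]
  · have hl := log_lb_big u h.le
    have h2 : 2*u^2 * ((3:ℝ)/2) ≤ 2*u^2 * Real.log (u/8.5) :=
      mul_le_mul_of_nonneg_left hl (by positivity)
    nlinarith

noncomputable def g (s : ℝ) : ℝ := 1/(s*(s+18)) - Real.log ((s+18)/8.5) / s^2

lemma log_deriv (s : ℝ) (hs : 0 < s) :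
    HasDerivAt (fun x : ℝ => Real.log ((x + 18) / 8.5)) (1/(s+18)) s := by
  have h1 : HasDerivAt (fun x : ℝ => (x + 18) / 8.5) (1/8.5) s := by
    simpa using ((hasDerivAt_id s).add_const 18).div_const 8.5
  have h2 := h1.log (by positivity)
  convert h2 using 1
  field_simp

lemma f_deriv (s : ℝ) (hs : 0 < s) :
    HasDerivAt (fun x : ℝ => Real.log ((x + 18) / 8.5) / x) (g s) s := by
  have h := (log_deriv s hs).div (hasDerivAt_id s) (ne_of_gt hs)
  refine h.congr_deriv ?_
  unfold g
  simp only [id_eq]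
  field_simp

lemma g_deriv (t : ℝ) (ht : 0 < t) :
    HasDerivAt g
      ((2 * Real.log ((t+18)/8.5) * (t+18)^2 - 3*t*(t+12)) / (t^3 * (t+18)^2)) t := by
  have hne : t * (t + 18) ≠ 0 := by positivity
  have hd : HasDerivAt (fun s : ℝ => s * (s + 18)) (1*(t+18) + t*1) t :=
    (hasDerivAt_id t).mul ((hasDerivAt_id t).add_const 18)
  have h1 : HasDerivAt (fun s : ℝ => 1/(s*(s+18)))
      ((0 * (t*(t+18)) - 1 * (1*(t+18) + t*1)) / (t*(t+18))^2) t :=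
    (hasDerivAt_const t 1).div hd hne
  have hp : HasDerivAt (fun s : ℝ => s^2) ((2:ℕ) * t^1) t := hasDerivAt_pow 2 t
  have h2 : HasDerivAt (fun s : ℝ => Real.log ((s+18)/8.5) / s^2)
      ((1/(t+18) * t^2 - Real.log ((t+18)/8.5) * ((2:ℕ) * t^1)) / (t^2)^2) t :=
    (log_deriv t ht).div hp (by positivity)
  have h3 := h1.sub h2
  refine h3.congr_deriv ?_
  have h18 : (t:ℝ) + 18 ≠ 0 := by positivity
  field_simp
  ring

theorem second_deriv_pos (t : ℝ) (ht : 0 < t) :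
    0 < deriv (deriv (fun t : ℝ => Real.log ((t + 18) / 8.5) / t)) t := by
  have heq : deriv (fun t : ℝ => Real.log ((t + 18) / 8.5) / t) =ᶠ[nhds t] g := by
    filter_upwards [eventually_gt_nhds ht] with s hs
    exact (f_deriv s hs).deriv
  rw [Filter.EventuallyEq.deriv_eq heq, (g_deriv t ht).deriv]
  apply div_pos _ (by positivity)
  have := key_ineq (t + 18) (by linarith)
  nlinarith [this]
end

section
/- Let g(t) = 2(t+18)² · ln((t+18)/8.5) − (3t² + 36t). Then g(t) > 0 for all t > 0. -/
theorem g_pos (t : ℝ) (ht : 0 < t) :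
    0 < 2 * (t + 18) ^ 2 * Real.log ((t + 18) / 8.5) - (3 * t ^ 2 + 36 * t) := by
  set y : ℝ := (t + 18) / 8.5 with hy
  have hypos : 0 < y := by rw [hy]; positivity
  have ht18 : (0:ℝ) < t + 18 := by linarith
  rcases le_or_gt t 21 with h | h
  · have hlog : 1 - 1/y ≤ Real.log y := by
      have h0 : (0:ℝ) < 1/y := by positivity
      have := Real.log_le_sub_one_of_pos h0
      rw [Real.log_div one_ne_zero (ne_of_gt hypos), Real.log_one] at this
      linarith
    have h1y : 1 - 1/y = (t + 9.5)/(t+18) := by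
      rw [hy]; field_simp; ring
    have key : 3 * t ^ 2 + 36 * t < 2 * (t+18)^2 * ((t + 9.5)/(t+18)) := by
      have e : 2 * (t+18)^2 * ((t + 9.5)/(t+18)) = 2*(t+18)*(t+9.5) := by
        field_simp
      rw [e]; nlinarith
    have hmono : 2 * (t+18)^2 * ((t + 9.5)/(t+18)) ≤ 2 * (t + 18) ^ 2 * Real.log y := by
      rw [← h1y]
      exact mul_le_mul_of_nonneg_left hlog (by positivity)
    linarith
  · have he : Real.exp (3/2) < 39/8.5 := by
      have h2 : Real.exp (3/2) ^ 2 = Real.exp 1 ^ 3 := by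
        rw [Real.exp_one_pow, sq, ← Real.exp_add]; push_cast; norm_num
      have h3 : Real.exp 1 ^ 3 < 2.7182818286 ^ 3 :=
        pow_lt_pow_left₀ Real.exp_one_lt_d9 (Real.exp_pos 1).le (by norm_num)
      nlinarith [Real.exp_pos (3/2 : ℝ)]
    have hlog : (3:ℝ)/2 ≤ Real.log y := by
      rw [← Real.log_exp (3/2)]
      apply Real.log_le_log (Real.exp_pos _)
      have : (39:ℝ)/8.5 ≤ y := by
        rw [hy]
        exact (div_le_div_iff_of_pos_right (by norm_num : (0:ℝ) < 8.5)).mpr (by linarith)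
      linarith
    nlinarith [hlog]
end

section
/- For all real numbers a, b, c with 0 < a < b and c > 0, one has ∫_a^b ln(1 + c/t)/t dt ≤ (9/8) · ln( b(3a + 2c) / (a(3b + 2c)) ) + c(b − a)/(4ab). -/
open Real Set intervalIntegral

lemma log_ineq (x : ℝ) (hx : 0 ≤ x) :
    Real.log (1 + x) ≤ 9 * x / (4 * (3 + 2 * x)) + x / 4 := by
  set F : ℝ → ℝ := fun y => 9/8 - 27/8 * (3 + 2*y)⁻¹ + y/4 - Real.log (1 + y) with hF
  have hderiv : ∀ y ∈ Set.Ici (0:ℝ),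
      HasDerivAt F (27/(4*(3+2*y)^2) + 1/4 - (1+y)⁻¹) y := by
    intro y hy
    have hy0 : (0:ℝ) ≤ y := hy
    have h3 : (3 + 2*y) ≠ 0 := by nlinarith
    have h1 : (1 + y) ≠ 0 := by nlinarith
    have d1 : HasDerivAt (fun y : ℝ => 3 + 2*y) 2 y := by
      simpa using ((hasDerivAt_id y).const_mul 2).const_add 3
    have d2 : HasDerivAt (fun y : ℝ => (3 + 2*y)⁻¹) (-((3+2*y)^2)⁻¹ * 2) y :=
      (hasDerivAt_inv h3).comp y d1
    have d3 : HasDerivAt (fun y : ℝ => 1 + y) 1 y := by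
      simpa using (hasDerivAt_id y).const_add 1
    have d4 : HasDerivAt (fun y : ℝ => Real.log (1 + y)) ((1+y)⁻¹ * 1) y :=
      (Real.hasDerivAt_log h1).comp y d3
    have dA : HasDerivAt (fun y : ℝ => 9/8 - 27/8 * (3 + 2*y)⁻¹)
        (-(27/8 * (-((3+2*y)^2)⁻¹ * 2))) y := (d2.const_mul (27/8)).const_sub (9/8)
    have dB : HasDerivAt (fun y : ℝ => y/4) (1/4) y := by
      simpa using (hasDerivAt_id y).div_const 4
    have dF := (dA.add dB).sub d4
    refine dF.congr_deriv ?_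
    have h3' : ((3 + 2*y)^2) ≠ 0 := pow_ne_zero _ h3
    field_simp
    ring
  have hmono : MonotoneOn F (Set.Ici 0) := by
    apply monotoneOn_of_deriv_nonneg (convex_Ici 0)
    · exact fun y hy => (hderiv y hy).differentiableAt.continuousAt.continuousWithinAt
    · intro y hy
      rw [interior_Ici] at hy
      exact (hderiv y (Set.mem_Ici.mpr (Set.mem_Ioi.mp hy).le)).differentiableAt.differentiableWithinAt
    · intro y hy
      rw [interior_Ici] at hy
      have hy' : (0:ℝ) < y := hy
      rw [(hderiv y (Set.mem_Ici.mpr hy'.le)).deriv]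
      have h1 : (0:ℝ) < 1 + y := by linarith
      have h3 : (0:ℝ) < 3 + 2*y := by linarith
      have heq : 27/(4*(3+2*y)^2) + 1/4 - (1+y)⁻¹ = y^3/((3+2*y)^2*(1+y)) := by
        field_simp
        ring
      rw [heq]
      exact div_nonneg (pow_nonneg hy'.le 3) (mul_nonneg (sq_nonneg _) h1.le)
  have h0 : F 0 = 0 := by norm_num [hF]
  have hFx : 0 ≤ F x := by
    have := hmono (Set.self_mem_Ici) (Set.mem_Ici.mpr hx) hx
    rwa [h0] at this
  have heq2 : 9/8 - 27/8 * (3 + 2*x)⁻¹ = 9 * x / (4 * (3 + 2 * x)) := by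
    have h3 : (3 + 2*x) ≠ 0 := by nlinarith
    field_simp
    ring
  simp only [hF] at hFx
  rw [heq2] at hFx
  linarith

theorem integral_log_bound (a b c : ℝ) (ha : 0 < a) (hab : a < b) (hc : 0 < c) :
    ∫ t in a..b, Real.log (1 + c / t) / t ≤
      9 / 8 * Real.log (b * (3 * a + 2 * c) / (a * (3 * b + 2 * c))) +
        c * (b - a) / (4 * a * b) := by
  have hb : 0 < b := ha.trans hab
  have huIcc : Set.uIcc a b = Set.Icc a b := Set.uIcc_of_le hab.le
  -- the comparison function
  set g : ℝ → ℝ := fun t => 9*c/(4*(t*(3*t+2*c))) + c/(4*t^2) with hg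
  have hpos : ∀ t ∈ Set.Icc a b, 0 < t := fun t ht => ha.trans_le ht.1
  -- continuity of both integrands on Icc a b
  have hcontf : ContinuousOn (fun t => Real.log (1 + c / t) / t) (Set.Icc a b) := by
    apply ContinuousOn.div
    · apply ContinuousOn.log
      · exact continuousOn_const.add (continuousOn_const.div continuousOn_id
          (fun t ht => (hpos t ht).ne'))
      · intro t ht
        have := hpos t ht
        positivity
    · exact continuousOn_id
    · exact fun t ht => (hpos t ht).ne'
  have hcontg : ContinuousOn g (Set.Icc a b) := by
    apply ContinuousOn.add
    · apply ContinuousOn.div continuousOn_const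
      · fun_prop
      · intro t ht
        have := hpos t ht
        positivity
    · apply ContinuousOn.div continuousOn_const
      · fun_prop
      · intro t ht
        have := hpos t ht
        positivity
  have hintf : IntervalIntegrable (fun t => Real.log (1 + c / t) / t) MeasureTheory.volume a b :=
    (huIcc ▸ hcontf).intervalIntegrable
  have hintg : IntervalIntegrable g MeasureTheory.volume a b :=
    (huIcc ▸ hcontg).intervalIntegrable
  -- pointwise bound
  have hpt : ∀ t ∈ Set.Icc a b, Real.log (1 + c / t) / t ≤ g t := by
    intro t ht
    have ht0 : 0 < t := hpos t ht
    have hx : 0 ≤ c / t := by positivity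
    have key := log_ineq (c/t) hx
    have h1 : Real.log (1 + c / t) / t ≤ (9 * (c/t) / (4 * (3 + 2 * (c/t))) + (c/t) / 4) / t :=
      (div_le_div_iff_of_pos_right ht0).mpr key
    have h2 : (9 * (c/t) / (4 * (3 + 2 * (c/t))) + (c/t) / 4) / t = g t := by
      have h3 : (3*t + 2*c) ≠ 0 := by positivity
      simp only [hg]
      field_simp
    linarith [h2 ▸ h1]
  have hmono := intervalIntegral.integral_mono_on hab.le hintf hintg hpt
  -- compute ∫ g via antiderivative
  set G : ℝ → ℝ := fun t => 9/8 * Real.log t - 9/8 * Real.log (3*t + 2*c) - c/4 * t⁻¹ with hG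
  have hderivG : ∀ t ∈ Set.uIcc a b, HasDerivAt G (g t) t := by
    intro t ht
    rw [huIcc] at ht
    have ht0 : 0 < t := hpos t ht
    have h3 : (3*t + 2*c) ≠ 0 := by positivity
    have d1 : HasDerivAt (fun t : ℝ => Real.log t) t⁻¹ t := Real.hasDerivAt_log ht0.ne'
    have dl : HasDerivAt (fun t : ℝ => 3*t + 2*c) 3 t := by
      simpa using ((hasDerivAt_id t).const_mul 3).add_const (2*c)
    have d2 : HasDerivAt (fun t : ℝ => Real.log (3*t + 2*c)) ((3*t+2*c)⁻¹ * 3) t :=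
      ((Real.hasDerivAt_log h3).comp t dl :)
    have d3 : HasDerivAt (fun t : ℝ => t⁻¹) (-(t^2)⁻¹) t := hasDerivAt_inv ht0.ne'
    have dG := (((d1.const_mul (9/8)).sub (d2.const_mul (9/8))).sub (d3.const_mul (c/4)))
    refine dG.congr_deriv ?_
    simp only [hg]
    field_simp
    ring
  have hcalc : ∫ t in a..b, g t = G b - G a :=
    intervalIntegral.integral_eq_sub_of_hasDerivAt hderivG hintg
  -- final algebra
  have hfin : G b - G a =
      9 / 8 * Real.log (b * (3 * a + 2 * c) / (a * (3 * b + 2 * c))) +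
        c * (b - a) / (4 * a * b) := by
    have h3a : (0:ℝ) < 3*a + 2*c := by positivity
    have h3b : (0:ℝ) < 3*b + 2*c := by positivity
    rw [Real.log_div (by positivity) (by positivity), Real.log_mul hb.ne' h3a.ne',
      Real.log_mul ha.ne' h3b.ne']
    simp only [hG]
    have : (3*a + 2*c) = (3*a + 2*c) := rfl
    field_simp
    ring
  exact le_of_le_of_eq hmono (hcalc.trans hfin)
end

section
/- For every integer k ≥ 2, the Riemann zeta function satisfies (∏_{i=k+1}^{2k} ζ(i)) / (∏_{i=2}^{k} ζ(i)) > π^{4−2k} · 2^{3k−7}. -/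
open Real

noncomputable def zeta (s : ℕ) : ℝ := ∑' n : ℕ, 1 / ((n : ℝ) + 1) ^ s

lemma zeta_summable {s : ℕ} (hs : 2 ≤ s) :
    Summable (fun n : ℕ => 1 / ((n : ℝ) + 1) ^ s) := by
  have h := Real.summable_one_div_nat_pow.mpr (by omega : 1 < s)
  have := (summable_nat_add_iff (f := fun n : ℕ => 1 / (n : ℝ) ^ s) 1).mpr h
  simpa using this

lemma tail_summable {s : ℕ} (hs : 2 ≤ s) :
    Summable (fun n : ℕ => 1 / ((n : ℝ) + 2) ^ s) := by
  have := (summable_nat_add_iff (f := fun n : ℕ => 1 / ((n : ℝ) + 1) ^ s) 1).mpr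
    (zeta_summable hs)
  exact this.congr fun n => by push_cast; ring_nf

lemma zeta_eq_full {s : ℕ} (hs : 2 ≤ s) :
    zeta s = ∑' n : ℕ, 1 / (n : ℝ) ^ s := by
  have h := Real.summable_one_div_nat_pow.mpr (by omega : 1 < s)
  rw [h.tsum_eq_zero_add]
  have : (1 : ℝ) / ((0 : ℕ) : ℝ) ^ s = 0 := by
    simp [zero_pow (by omega : s ≠ 0)]
  rw [this, zero_add, zeta]
  push_cast
  rfl

lemma zeta_eq_one_add_tail {s : ℕ} (hs : 2 ≤ s) :
    zeta s = 1 + ∑' n : ℕ, 1 / ((n : ℝ) + 2) ^ s := by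
  rw [zeta, (zeta_summable hs).tsum_eq_zero_add]
  push_cast
  norm_num [add_assoc]

lemma zeta_two : zeta 2 = π ^ 2 / 6 := by
  rw [zeta_eq_full (le_refl 2), hasSum_zeta_two.tsum_eq]

lemma zeta_four : zeta 4 = π ^ 4 / 90 := by
  rw [zeta_eq_full (by norm_num), hasSum_zeta_four.tsum_eq]

lemma one_le_zeta {s : ℕ} (hs : 2 ≤ s) : 1 ≤ zeta s := by
  rw [zeta_eq_one_add_tail hs]
  have : 0 ≤ ∑' n : ℕ, 1 / ((n : ℝ) + 2) ^ s := tsum_nonneg fun n => by positivity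
  linarith

lemma zeta_pos {s : ℕ} (hs : 2 ≤ s) : 0 < zeta s := lt_of_lt_of_le one_pos (one_le_zeta hs)

lemma zeta_three_le : zeta 3 ≤ 5 / 4 := by
  rw [zeta_eq_one_add_tail (by norm_num)]
  have key : ∀ N : ℕ, ∑ n ∈ Finset.range N, 1 / ((n : ℝ) + 2) ^ 3
      ≤ 1 / 4 - 1 / (2 * ((N : ℝ) + 1) * ((N : ℝ) + 2)) := by
    intro N
    induction N with
    | zero => norm_num
    | succ N ih =>
      rw [Finset.sum_range_succ]
      have hx : (0 : ℝ) ≤ (N : ℝ) := Nat.cast_nonneg N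
      have h1 : 1 / ((N : ℝ) + 2) ^ 3
          ≤ 1 / (2 * ((N : ℝ) + 1) * ((N : ℝ) + 2)) - 1 / (2 * ((N : ℝ) + 2) * ((N : ℝ) + 3)) := by
        rw [div_sub_div _ _ (by positivity) (by positivity),
          div_le_div_iff₀ (by positivity) (by positivity)]
        nlinarith [sq_nonneg ((N : ℝ) + 2)]
      push_cast
      have e : 2 * ((N:ℝ) + 1 + 1) * ((N:ℝ) + 1 + 2) = 2 * ((N:ℝ) + 2) * ((N:ℝ) + 3) := by ring
      rw [e]
      linarith
  have h : (∑' n : ℕ, 1 / ((n : ℝ) + 2) ^ 3) ≤ 1 / 4 := by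
    apply Real.tsum_le_of_sum_range_le (fun n => by positivity)
    intro N
    have h2 : 0 < 1 / (2 * ((N : ℝ) + 1) * ((N : ℝ) + 2)) := by positivity
    linarith [key N]
  linarith

lemma tail_four : (∑' n : ℕ, 1 / ((n : ℝ) + 2) ^ 4) ≤ 1 / 8 := by
  have h := zeta_eq_one_add_tail (s := 4) (by norm_num)
  rw [zeta_four] at h
  have hpi : π < 3.15 := by
    have := Real.pi_lt_d2
    linarith
  have hpi0 : 0 < π := Real.pi_pos
  have h2 : π ^ 2 < 9.9225 := by nlinarith
  have h4 : π ^ 4 < 98.46 := by nlinarith [sq_nonneg (π ^ 2)]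
  linarith

lemma zeta_le_pow {s : ℕ} (hs : 4 ≤ s) : zeta s ≤ 1 + (1 / 2 : ℝ) ^ (s - 1) := by
  rw [zeta_eq_one_add_tail (by omega)]
  have hts : (∑' n : ℕ, 1 / ((n : ℝ) + 2) ^ s)
      ≤ (1 / 2 : ℝ) ^ (s - 4) * ∑' n : ℕ, 1 / ((n : ℝ) + 2) ^ 4 := by
    rw [← tsum_mul_left]
    have hsum1 : Summable (fun n : ℕ => 1 / ((n : ℝ) + 2) ^ s) := tail_summable (by omega)
    have hsum2 : Summable (fun n : ℕ => (1 / 2 : ℝ) ^ (s - 4) * (1 / ((n : ℝ) + 2) ^ 4)) :=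
      (tail_summable (s := 4) (by norm_num)).mul_left _
    refine Summable.tsum_le_tsum (fun n => ?_) hsum1 hsum2
    have h2 : (2 : ℝ) ≤ (n : ℝ) + 2 := by linarith [(Nat.cast_nonneg n : (0:ℝ) ≤ (n:ℝ))]
    have hsplit : ((n : ℝ) + 2) ^ s = ((n : ℝ) + 2) ^ (s - 4) * ((n : ℝ) + 2) ^ 4 := by
      rw [← pow_add]; congr 1; omega
    rw [div_pow, one_pow, div_mul_div_comm, one_mul, hsplit]
    apply one_div_le_one_div_of_le (by positivity)
    exact mul_le_mul_of_nonneg_right (pow_le_pow_left₀ (by norm_num) h2 _) (by positivity)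
  have h8 : (1 / 2 : ℝ) ^ (s - 4) * (∑' n : ℕ, 1 / ((n : ℝ) + 2) ^ 4)
      ≤ (1 / 2 : ℝ) ^ (s - 4) * (1 / 8) :=
    mul_le_mul_of_nonneg_left tail_four (by positivity : (0:ℝ) ≤ (1 / 2 : ℝ) ^ (s - 4))
  have hpow : (1 / 2 : ℝ) ^ (s - 4) * (1 / 8) = (1 / 2 : ℝ) ^ (s - 1) := by
    rw [show (1 / 8 : ℝ) = (1 / 2 : ℝ) ^ 3 by norm_num, ← pow_add]
    congr 1; omega
  linarith [hts.trans (h8.trans_eq hpow)]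

lemma prod_zeta_le {k : ℕ} (hk : 3 ≤ k) :
    ∏ i ∈ Finset.Icc 4 k, zeta i ≤ 1 / (3 / 4 + 2 * (1 / 2 : ℝ) ^ k) := by
  induction k, hk using Nat.le_induction with
  | base => norm_num
  | succ k hk ih =>
    rw [Finset.prod_Icc_succ_top (by omega)]
    set y : ℝ := (1 / 2 : ℝ) ^ k with hy
    have hy0 : (0 : ℝ) < y := by positivity
    have hy8 : y ≤ 1 / 8 := by
      calc y ≤ (1 / 2 : ℝ) ^ 3 := pow_le_pow_of_le_one (by norm_num) (by norm_num) hk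
        _ = 1 / 8 := by norm_num
    have h1 : zeta (k + 1) ≤ 1 + y := by
      have h := zeta_le_pow (s := k + 1) (by omega)
      have : k + 1 - 1 = k := by omega
      rwa [this] at h
    have hz0 : 0 < zeta (k + 1) := zeta_pos (by omega)
    have hd0 : (0 : ℝ) < 3 / 4 + 2 * y := by positivity
    have step : (∏ i ∈ Finset.Icc 4 k, zeta i) * zeta (k + 1)
        ≤ (1 / (3 / 4 + 2 * y)) * (1 + y) := by
      apply mul_le_mul ih h1 hz0.le (by positivity)
    have hy1 : (1 / 2 : ℝ) ^ (k + 1) = y / 2 := by rw [pow_succ, hy]; ring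
    rw [hy1]
    have hd1 : (0 : ℝ) < 3 / 4 + 2 * (y / 2) := by positivity
    have step2 : (1 / (3 / 4 + 2 * y)) * (1 + y) ≤ 1 / (3 / 4 + 2 * (y / 2)) := by
      rw [div_mul_eq_mul_div, div_le_div_iff₀ hd0 hd1]
      nlinarith
    linarith

lemma denom_le {k : ℕ} (hk : 4 ≤ k) :
    ∏ i ∈ Finset.Icc 2 k, zeta i ≤ π ^ 2 / 6 * (5 / 4) * (4 / 3) := by
  have h23 : Finset.Icc 2 k = insert 2 (insert 3 (Finset.Icc 4 k)) := by
    ext i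
    simp only [Finset.mem_Icc, Finset.mem_insert]
    omega
  rw [h23, Finset.prod_insert (by simp), Finset.prod_insert (by simp [Finset.mem_Icc])]
  have hp : ∏ i ∈ Finset.Icc 4 k, zeta i ≤ 4 / 3 := by
    have h := prod_zeta_le (by omega : 3 ≤ k)
    have hy : (0 : ℝ) < (1 / 2 : ℝ) ^ k := by positivity
    have : 1 / (3 / 4 + 2 * (1 / 2 : ℝ) ^ k) ≤ 4 / 3 := by
      rw [div_le_div_iff₀ (by positivity) (by norm_num)]
      linarith
    linarith
  have hp0 : 0 ≤ ∏ i ∈ Finset.Icc 4 k, zeta i :=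
    Finset.prod_nonneg fun i hi => (zeta_pos (by have := (Finset.mem_Icc.mp hi).1; omega)).le
  rw [zeta_two]
  have h3 : zeta 3 ≤ 5 / 4 := zeta_three_le
  have h30 : 0 < zeta 3 := zeta_pos (by norm_num)
  have hpi : (0 : ℝ) < π ^ 2 / 6 := by positivity
  calc π ^ 2 / 6 * (zeta 3 * ∏ i ∈ Finset.Icc 4 k, zeta i)
      ≤ π ^ 2 / 6 * ((5 / 4) * (4 / 3)) := by
        apply mul_le_mul_of_nonneg_left _ hpi.le
        exact mul_le_mul h3 hp hp0 (by norm_num)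
    _ = π ^ 2 / 6 * (5 / 4) * (4 / 3) := by ring

lemma rhs_succ (k : ℕ) : π ^ ((4 : ℝ) - 2 * ((k : ℕ) + 1 : ℕ)) * 2 ^ ((3 : ℝ) * ((k : ℕ) + 1 : ℕ) - 7)
    = (π ^ ((4 : ℝ) - 2 * k) * 2 ^ ((3 : ℝ) * k - 7)) * (8 / π ^ 2) := by
  push_cast
  rw [show ((4 : ℝ) - 2 * ((k : ℝ) + 1)) = ((4 : ℝ) - 2 * k) + (-2) by ring,
    Real.rpow_add Real.pi_pos,
    show ((3 : ℝ) * ((k : ℝ) + 1) - 7) = ((3 : ℝ) * k - 7) + 3 by ring,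
    Real.rpow_add (by norm_num : (0 : ℝ) < 2)]
  rw [show (-2 : ℝ) = -((2 : ℕ) : ℝ) by norm_num, Real.rpow_neg Real.pi_pos.le,
    Real.rpow_natCast, show (3 : ℝ) = ((3 : ℕ) : ℝ) by norm_num, Real.rpow_natCast]
  have hpi : π ^ 2 ≠ 0 := by positivity
  field_simp
  ring

lemma rhs_le {k : ℕ} (hk : 4 ≤ k) :
    π ^ ((4 : ℝ) - 2 * k) * 2 ^ ((3 : ℝ) * k - 7) ≤ 32 / π ^ 4 := by
  induction k, hk using Nat.le_induction with
  | base =>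
    rw [show ((4 : ℝ) - 2 * ((4 : ℕ) : ℝ)) = -((4 : ℕ) : ℝ) by push_cast; ring,
      Real.rpow_neg Real.pi_pos.le, Real.rpow_natCast,
      show ((3 : ℝ) * ((4 : ℕ) : ℝ) - 7) = ((5 : ℕ) : ℝ) by push_cast; ring,
      Real.rpow_natCast]
    rw [inv_eq_one_div, div_mul_eq_mul_div, one_mul]
    norm_num
  | succ k hk ih =>
    rw [rhs_succ k]
    have h0 : (0 : ℝ) ≤ π ^ ((4 : ℝ) - 2 * k) * 2 ^ ((3 : ℝ) * k - 7) := by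
      have := Real.rpow_nonneg Real.pi_pos.le ((4 : ℝ) - 2 * k)
      have := Real.rpow_nonneg (by norm_num : (0:ℝ) ≤ 2) ((3 : ℝ) * k - 7)
      positivity
    have h8 : 8 / π ^ 2 ≤ 1 := by
      rw [div_le_one (by positivity)]
      nlinarith [Real.pi_gt_three]
    calc π ^ ((4 : ℝ) - 2 * k) * 2 ^ ((3 : ℝ) * k - 7) * (8 / π ^ 2)
        ≤ π ^ ((4 : ℝ) - 2 * k) * 2 ^ ((3 : ℝ) * k - 7) * 1 :=
          mul_le_mul_of_nonneg_left h8 h0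
      _ = π ^ ((4 : ℝ) - 2 * k) * 2 ^ ((3 : ℝ) * k - 7) := mul_one _
      _ ≤ 32 / π ^ 4 := ih

theorem zeta_ratio_bound (k : ℕ) (hk : 2 ≤ k) :
    (∏ i ∈ Finset.Icc (k + 1) (2 * k), zeta i) / (∏ i ∈ Finset.Icc 2 k, zeta i) >
      Real.pi ^ ((4 : ℝ) - 2 * k) * 2 ^ ((3 : ℝ) * k - 7) := by
  have hpi3 : (3 : ℝ) < π := Real.pi_gt_three
  have h9 : (9 : ℝ) < π ^ 2 := by nlinarith
  rcases (by omega : k = 2 ∨ k = 3 ∨ 4 ≤ k) with h | h | h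
  · subst h
    rw [show ((4 : ℝ) - 2 * ((2 : ℕ) : ℝ)) = ((0 : ℕ) : ℝ) by push_cast; ring,
      Real.rpow_natCast, show ((3 : ℝ) * ((2 : ℕ) : ℝ) - 7) = ((-1 : ℤ) : ℝ) by push_cast; ring,
      Real.rpow_intCast]
    have h1 : Finset.Icc (2 + 1) (2 * 2) = {3, 4} := by decide
    have h2 : Finset.Icc 2 2 = {2} := Finset.Icc_self 2
    rw [h1, h2, Finset.prod_singleton, Finset.prod_pair (by norm_num)]
    rw [zeta_two, zeta_four, gt_iff_lt, lt_div_iff₀ (by positivity)]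
    have hz3 := one_le_zeta (by norm_num : 2 ≤ 3)
    have hm : π ^ 4 / 90 ≤ zeta 3 * (π ^ 4 / 90) :=
      le_mul_of_one_le_left (by positivity) hz3
    rw [pow_zero, one_mul]
    norm_num
    nlinarith [hm]
  · subst h
    rw [show ((4 : ℝ) - 2 * ((3 : ℕ) : ℝ)) = ((-2 : ℤ) : ℝ) by push_cast; ring,
      Real.rpow_intCast, show ((3 : ℝ) * ((3 : ℕ) : ℝ) - 7) = ((2 : ℕ) : ℝ) by push_cast; ring,
      Real.rpow_natCast]
    have h1 : Finset.Icc (3 + 1) (2 * 3) = {4, 5, 6} := by decide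
    have h2 : Finset.Icc 2 3 = {2, 3} := by decide
    rw [h1, h2, Finset.prod_pair (by norm_num),
      Finset.prod_insert (by norm_num), Finset.prod_pair (by norm_num)]
    have hz3l := one_le_zeta (by norm_num : 2 ≤ 3)
    have hz3u := zeta_three_le
    have hz5 := one_le_zeta (by norm_num : 2 ≤ 5)
    have hz6 := one_le_zeta (by norm_num : 2 ≤ 6)
    have hD : (0 : ℝ) < zeta 2 * zeta 3 := mul_pos (zeta_pos (by norm_num)) (zeta_pos (by norm_num))
    rw [gt_iff_lt, lt_div_iff₀ hD]
    have hπ2 : (0 : ℝ) < π ^ 2 := by positivity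
    have hB : π ^ (-2 : ℤ) * 2 ^ 2 * (zeta 2 * zeta 3) ≤ 5 / 6 := by
      rw [zeta_two, zpow_neg]
      have he : (π ^ (2 : ℤ))⁻¹ * 2 ^ 2 * (π ^ 2 / 6 * zeta 3) = 2 / 3 * zeta 3 := by
        rw [show (π ^ (2 : ℤ)) = π ^ 2 by rw [zpow_two, pow_two]]
        field_simp
        ring
      rw [he]
      linarith
    have h56 : (1 : ℝ) ≤ zeta 5 * zeta 6 := by nlinarith
    have hA : π ^ 4 / 90 ≤ zeta 4 * (zeta 5 * zeta 6) := by
      rw [zeta_four]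
      exact le_mul_of_one_le_right (by positivity) h56
    nlinarith [hA, hB]
  · -- general case k ≥ 4
    have hN : (1 : ℝ) ≤ ∏ i ∈ Finset.Icc (k + 1) (2 * k), zeta i := by
      have := Finset.prod_le_prod (s := Finset.Icc (k + 1) (2 * k))
        (f := fun _ => (1 : ℝ)) (g := zeta) (fun i _ => zero_le_one)
        (fun i hi => one_le_zeta (by have h5 := (Finset.mem_Icc.mp hi).1; omega))
      simpa using this
    have hD0 : (0 : ℝ) < ∏ i ∈ Finset.Icc 2 k, zeta i :=
      Finset.prod_pos fun i hi => zeta_pos (Finset.mem_Icc.mp hi).1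
    have hDle := denom_le h
    have hbound : (0 : ℝ) < π ^ 2 / 6 * (5 / 4) * (4 / 3) := by positivity
    have hc1 : (32 : ℝ) / π ^ 4 < 1 / (π ^ 2 / 6 * (5 / 4) * (4 / 3)) := by
      rw [div_lt_div_iff₀ (by positivity) hbound]
      nlinarith [Real.pi_gt_d2]
    have hc2 : 1 / (π ^ 2 / 6 * (5 / 4) * (4 / 3)) ≤ 1 / ∏ i ∈ Finset.Icc 2 k, zeta i :=
      one_div_le_one_div_of_le hD0 hDle
    have hc3 : 1 / ∏ i ∈ Finset.Icc 2 k, zeta i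
        ≤ (∏ i ∈ Finset.Icc (k + 1) (2 * k), zeta i) / ∏ i ∈ Finset.Icc 2 k, zeta i := by
      gcongr
    exact lt_of_le_of_lt (rhs_le h) (lt_of_lt_of_le hc1 (hc2.trans hc3))
end

section
/- For every integer k ≥ 2, (∏_{i=k+1}^{2k} Γ(i/2 + 1)) / (∏_{i=2}^{k} Γ(i/2 + 1)) ≥ √π · 2^{k²/2} · e^{−(3k²+4)/4} · k^{(2k²−2k−1)/4} · √((2k)! / (k!·(k+1)!)). -/
open Real Finset Nat Filter

namespace GammaRatioAux

noncomputable def Gh (i : ℕ) : ℝ := Real.Gamma ((i : ℝ) / 2 + 1)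

lemma Gh_pos (i : ℕ) : 0 < Gh i := Real.Gamma_pos_of_pos (by positivity)

lemma Gh_pair (i : ℕ) :
    Gh i * Gh (i + 1) = Real.sqrt π * (Nat.factorial (i + 1)) / 2 ^ (i + 1) := by
  have h := Real.Gamma_mul_Gamma_add_half ((i : ℝ) / 2 + 1)
  have h1 : ((i + 1 : ℕ) : ℝ) / 2 + 1 = (i : ℝ) / 2 + 1 + 1 / 2 := by push_cast; ring
  have h2 : 2 * ((i : ℝ) / 2 + 1) = ((i + 1 : ℕ) : ℝ) + 1 := by push_cast; ring
  have h3 : (1 : ℝ) - 2 * ((i : ℝ) / 2 + 1) = -((i + 1 : ℕ) : ℝ) := by push_cast; ring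
  rw [Gh, Gh, h1, h, h3, h2, Real.Gamma_nat_eq_factorial,
    Real.rpow_neg (by norm_num), Real.rpow_natCast]
  field_simp

lemma stirlingSeq_ge (n : ℕ) : Real.sqrt π ≤ Stirling.stirlingSeq (n + 1) := by
  have ht : Tendsto (Stirling.stirlingSeq ∘ Nat.succ) atTop (nhds (Real.sqrt π)) :=
    Stirling.tendsto_stirlingSeq_sqrt_pi.comp (tendsto_add_atTop_nat 1)
  exact Stirling.stirlingSeq'_antitone.le_of_tendsto ht n

lemma stirlingSeq_le (n : ℕ) : Stirling.stirlingSeq (n + 1) ≤ Real.exp 1 / Real.sqrt 2 := by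
  have := Stirling.stirlingSeq'_antitone (Nat.zero_le n)
  simpa [Stirling.stirlingSeq_one] using this

lemma factorial_lower (n : ℕ) (hn : 1 ≤ n) :
    Real.sqrt π * (Real.sqrt (2 * n) * ((n : ℝ) / Real.exp 1) ^ n) ≤ (Nat.factorial n : ℝ) := by
  obtain ⟨m, rfl⟩ : ∃ m, n = m + 1 := ⟨n - 1, by omega⟩
  have h := stirlingSeq_ge m
  have hd : 0 < Real.sqrt (2 * (m + 1 : ℕ)) * (((m + 1 : ℕ) : ℝ) / Real.exp 1) ^ (m + 1) := by
    positivity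
  rw [Stirling.stirlingSeq, le_div_iff₀ hd] at h
  linarith

lemma factorial_upper (n : ℕ) (hn : 1 ≤ n) :
    (Nat.factorial n : ℝ) ≤ Real.exp 1 * Real.sqrt n * ((n : ℝ) / Real.exp 1) ^ n := by
  obtain ⟨m, rfl⟩ : ∃ m, n = m + 1 := ⟨n - 1, by omega⟩
  have h := stirlingSeq_le m
  have hd : 0 < Real.sqrt (2 * (m + 1 : ℕ)) * (((m + 1 : ℕ) : ℝ) / Real.exp 1) ^ (m + 1) := by
    positivity
  rw [Stirling.stirlingSeq, div_le_iff₀ hd] at h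
  calc (Nat.factorial (m+1) : ℝ) ≤ Real.exp 1 / Real.sqrt 2 *
        (Real.sqrt (2 * (m+1:ℕ)) * (((m+1:ℕ):ℝ) / Real.exp 1) ^ (m+1)) := h
    _ = Real.exp 1 * Real.sqrt (m+1:ℕ) * (((m+1:ℕ):ℝ) / Real.exp 1) ^ (m+1) := by
        rw [show (2 * (m+1:ℕ) : ℝ) = 2 * ((m+1:ℕ):ℝ) by push_cast; ring,
          Real.sqrt_mul (by norm_num)]
        have h2 : Real.sqrt 2 ≠ 0 := by positivity
        field_simp

noncomputable def Pn (k : ℕ) : ℝ := ∏ i ∈ Finset.Ioc k (2 * k), Gh i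
noncomputable def Pd (k : ℕ) : ℝ := ∏ i ∈ Finset.Ioc 1 k, Gh i

lemma Pn_pos (k : ℕ) : 0 < Pn k := Finset.prod_pos fun i _ => Gh_pos i
lemma Pd_pos (k : ℕ) : 0 < Pd k := Finset.prod_pos fun i _ => Gh_pos i

lemma Pd_step (k : ℕ) (hk : 1 ≤ k) : Pd (k + 2) = Pd k * (Gh (k + 1) * Gh (k + 2)) := by
  rw [Pd, Pd, show k + 2 = (k + 1) + 1 from rfl,
    Finset.prod_Ioc_succ_top (by omega), Finset.prod_Ioc_succ_top (by omega), mul_assoc]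

lemma Pn_step (k : ℕ) (hk : 1 ≤ k) :
    Pn (k + 2) * (Gh (k + 1) * Gh (k + 2)) =
      Pn k * (Gh (2*k + 1) * Gh (2*k + 2) * (Gh (2*k + 3) * Gh (2*k + 4))) := by
  have h1 : (∏ i ∈ Finset.Ioc k (k+2), Gh i) * ∏ i ∈ Finset.Ioc (k+2) (2*k+4), Gh i
      = ∏ i ∈ Finset.Ioc k (2*k+4), Gh i := Finset.prod_Ioc_consecutive _ (by omega) (by omega)
  have h2 : (∏ i ∈ Finset.Ioc k (2*k), Gh i) * ∏ i ∈ Finset.Ioc (2*k) (2*k+4), Gh i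
      = ∏ i ∈ Finset.Ioc k (2*k+4), Gh i := Finset.prod_Ioc_consecutive _ (by omega) (by omega)
  have e1 : (∏ i ∈ Finset.Ioc k (k+2), Gh i) = Gh (k+1) * Gh (k+2) := by
    rw [show k + 2 = (k+1)+1 from rfl, Finset.prod_Ioc_succ_top (by omega),
      show k + 1 = k+1 from rfl, Finset.prod_Ioc_succ_top (by omega), Finset.Ioc_self,
      Finset.prod_empty, one_mul]
  have e2 : (∏ i ∈ Finset.Ioc (2*k) (2*k+4), Gh i)
      = Gh (2*k+1) * Gh (2*k+2) * (Gh (2*k+3) * Gh (2*k+4)) := by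
    rw [show 2*k+4 = (2*k+3)+1 from rfl, Finset.prod_Ioc_succ_top (by omega),
      show 2*k+3 = (2*k+2)+1 from rfl, Finset.prod_Ioc_succ_top (by omega),
      show 2*k+2 = (2*k+1)+1 from rfl, Finset.prod_Ioc_succ_top (by omega),
      show 2*k+1 = (2*k)+1 from rfl, Finset.prod_Ioc_succ_top (by omega), Finset.Ioc_self,
      Finset.prod_empty, one_mul]
    ring
  have hPn2 : Pn (k+2) = ∏ i ∈ Finset.Ioc (k+2) (2*k+4), Gh i := by
    rw [Pn, show 2*(k+2) = 2*k+4 by ring]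
  rw [hPn2, Pn, mul_comm, ← e1, h1, ← h2, e2]

lemma ratio_step (k : ℕ) (hk : 1 ≤ k) :
    Pn (k + 2) / Pd (k + 2) = (Pn k / Pd k) *
      (((2*k+2).factorial : ℝ) * ((2*k+4).factorial : ℝ)
        / (2 ^ (2*k+2) * (((k+2).factorial : ℝ))^2)) := by
  have hp1 : Gh (2*k+1) * Gh (2*k+2) = Real.sqrt π * ((2*k+2).factorial : ℝ) / 2 ^ (2*k+2) :=
    Gh_pair (2*k+1)
  have hp2 : Gh (2*k+3) * Gh (2*k+4) = Real.sqrt π * ((2*k+4).factorial : ℝ) / 2 ^ (2*k+4) :=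
    Gh_pair (2*k+3)
  have hpB : Gh (k+1) * Gh (k+2) = Real.sqrt π * ((k+2).factorial : ℝ) / 2 ^ (k+2) :=
    Gh_pair (k+1)
  have key := Pn_step k hk
  rw [hp1, hp2, hpB] at key
  rw [Pd_step k hk, hpB]
  have hπ : (0:ℝ) < Real.sqrt π := Real.sqrt_pos.mpr Real.pi_pos
  have h1 : ((k+2).factorial : ℝ) > 0 := by positivity
  have h2 : Pd k > 0 := Pd_pos k
  have hsq : Real.sqrt π * Real.sqrt π = π := Real.mul_self_sqrt Real.pi_pos.le
  have hfs : Pn (k+2) = Pn k * (Real.sqrt π * ((2*k+2).factorial : ℝ) / 2 ^ (2*k+2) *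
      (Real.sqrt π * ((2*k+4).factorial : ℝ) / 2 ^ (2*k+4)))
      / (Real.sqrt π * ((k+2).factorial : ℝ) / 2 ^ (k+2)) := by
    rw [eq_div_iff (by positivity)]
    exact key
  rw [hfs]
  field_simp
  ring

lemma sqrt4 (x : ℝ) (hx : 0 ≤ x) : Real.sqrt (4 * x) = 2 * Real.sqrt x := by
  rw [show (4:ℝ)*x = (2:ℝ)^2*x by ring, Real.sqrt_mul (by positivity), Real.sqrt_sq (by norm_num)]

lemma core_ineq (k : ℕ) :
    ((k : ℝ) + 2) ^ (2*k+2) ≤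
      4 * π * Real.sqrt (((k:ℝ)+1) * ((k:ℝ)+2)) * ((k:ℝ)+1) ^ (2*k+2) := by
  have hK1 : (0:ℝ) < (k:ℝ) + 1 := by positivity
  have h1 : ((k:ℝ) + 2) = ((k:ℝ)+1) * (1 + 1/((k:ℝ)+1)) := by field_simp; ring
  have h2 : (1 + 1/((k:ℝ)+1)) ≤ Real.exp (1/((k:ℝ)+1)) := by
    have := Real.add_one_le_exp (1/((k:ℝ)+1)); linarith
  have h3 : (1 + 1/((k:ℝ)+1)) ^ (2*k+2) ≤ Real.exp (1/((k:ℝ)+1)) ^ (2*k+2) :=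
    pow_le_pow_left₀ (by positivity) h2 _
  have h4 : Real.exp (1/((k:ℝ)+1)) ^ (2*k+2) = Real.exp 2 := by
    rw [← Real.exp_nat_mul]
    congr 1
    have : ((2*k+2 : ℕ) : ℝ) = 2 * ((k:ℝ)+1) := by push_cast; ring
    rw [this]; field_simp
  have h5 : Real.exp 2 ≤ 4 * π := by
    have he := Real.exp_one_lt_d9
    have hp := Real.pi_gt_three
    have : Real.exp 2 = Real.exp 1 * Real.exp 1 := by rw [← Real.exp_add]; norm_num
    nlinarith [Real.exp_pos 1]
  have h6 : (1:ℝ) ≤ Real.sqrt (((k:ℝ)+1) * ((k:ℝ)+2)) := by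
    have : Real.sqrt 1 ≤ Real.sqrt (((k:ℝ)+1) * ((k:ℝ)+2)) :=
      Real.sqrt_le_sqrt (by nlinarith [(Nat.cast_nonneg k : (0:ℝ) ≤ k)])
    simpa using this
  calc ((k:ℝ) + 2) ^ (2*k+2) = ((k:ℝ)+1) ^ (2*k+2) * (1 + 1/((k:ℝ)+1)) ^ (2*k+2) := by
        rw [h1, mul_pow]
    _ ≤ ((k:ℝ)+1) ^ (2*k+2) * Real.exp 2 := by
        rw [← h4]; exact mul_le_mul_of_nonneg_left h3 (by positivity)
    _ ≤ ((k:ℝ)+1) ^ (2*k+2) * (4 * π * Real.sqrt (((k:ℝ)+1) * ((k:ℝ)+2))) := by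
        have : Real.exp 2 ≤ 4 * π * Real.sqrt (((k:ℝ)+1) * ((k:ℝ)+2)) := by
          nlinarith [Real.pi_gt_three, Real.exp_pos 2]
        exact mul_le_mul_of_nonneg_left this (by positivity)
    _ = 4 * π * Real.sqrt (((k:ℝ)+1) * ((k:ℝ)+2)) * ((k:ℝ)+1) ^ (2*k+2) := by ring

lemma F_ineq (k : ℕ) :
    2^(4*k+6) * Real.exp (-(2*(k:ℝ)+4)) * ((k:ℝ)+2)^(2*k+1) * (((k+2).factorial : ℝ))^2
      ≤ ((2*k+2).factorial : ℝ) * ((2*k+4).factorial : ℝ) := by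
  have hK0 : (0:ℝ) ≤ (k:ℝ) := Nat.cast_nonneg k
  set K := (k:ℝ) with hKdef
  set E := Real.exp 1 with hEdef
  have hE : 0 < E := Real.exp_pos 1
  have hexp : Real.exp (-(2*K+4)) = (E^(2*k+4))⁻¹ := by
    rw [Real.exp_neg]
    congr 1
    rw [hEdef, ← Real.exp_nat_mul]
    congr 1
    push_cast [hKdef]; ring
  have hfu : ((k+2).factorial : ℝ) ≤ E * Real.sqrt (K+2) * ((K+2)/E)^(k+2) := by
    have h := factorial_upper (k+2) (by omega)
    rw [show (((k+2:ℕ)):ℝ) = K+2 by push_cast [hKdef]; ring] at h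
    exact h
  have hfl1 : Real.sqrt π * (Real.sqrt (2*(2*K+2)) * ((2*K+2)/E)^(2*k+2))
      ≤ ((2*k+2).factorial : ℝ) := by
    have h := factorial_lower (2*k+2) (by omega)
    rwa [show (((2*k+2:ℕ)):ℝ) = 2*K+2 by push_cast [hKdef]; ring] at h
  have hfl2 : Real.sqrt π * (Real.sqrt (2*(2*K+4)) * ((2*K+4)/E)^(2*k+4))
      ≤ ((2*k+4).factorial : ℝ) := by
    have h := factorial_lower (2*k+4) (by omega)
    rwa [show (((2*k+4:ℕ)):ℝ) = 2*K+4 by push_cast [hKdef]; ring] at h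
  have hsq : (E * Real.sqrt (K+2) * ((K+2)/E)^(k+2))^2
      = E^2 * (K+2) * ((K+2)/E)^((k+2)*2) := by
    rw [mul_pow, mul_pow, Real.sq_sqrt (by positivity), pow_mul]
  have hA : 2^(4*k+6) * (E^(2*k+4))⁻¹ * (K+2)^(2*k+1) * (E * Real.sqrt (K+2) * ((K+2)/E)^(k+2))^2
      = (2^(4*k+6) * (K+2)^(2*k+4)) * (K+2)^(2*k+2) / E^(4*k+6) := by
    rw [hsq, div_pow]
    field_simp
    ring
  have hB : (Real.sqrt π * (Real.sqrt (2*(2*K+2)) * ((2*K+2)/E)^(2*k+2))) *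
        (Real.sqrt π * (Real.sqrt (2*(2*K+4)) * ((2*K+4)/E)^(2*k+4)))
      = (2^(4*k+6) * (K+2)^(2*k+4)) *
          (4 * (Real.sqrt π * Real.sqrt π) * (Real.sqrt (K+1) * Real.sqrt (K+2)) *
            (K+1)^(2*k+2)) / E^(4*k+6) := by
    rw [show 2*(2*K+2) = 4*(K+1) by ring, show 2*(2*K+4) = 4*(K+2) by ring,
      sqrt4 _ (by positivity), sqrt4 _ (by positivity),
      show 2*K+2 = 2*(K+1) by ring, show 2*K+4 = 2*(K+2) by ring,
      mul_div_assoc, mul_div_assoc, mul_pow, mul_pow, div_pow, div_pow]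
    field_simp
    ring_nf
  have hcore : (K+2)^(2*k+2) ≤
      4 * (Real.sqrt π * Real.sqrt π) * (Real.sqrt (K+1) * Real.sqrt (K+2)) * (K+1)^(2*k+2) := by
    have h := core_ineq k
    rwa [show π = Real.sqrt π * Real.sqrt π from (Real.mul_self_sqrt Real.pi_pos.le).symm,
      Real.sqrt_mul (by positivity)] at h
  have key : 2^(4*k+6) * (E^(2*k+4))⁻¹ * (K+2)^(2*k+1) * (E * Real.sqrt (K+2) * ((K+2)/E)^(k+2))^2
      ≤ (Real.sqrt π * (Real.sqrt (2*(2*K+2)) * ((2*K+2)/E)^(2*k+2))) *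
        (Real.sqrt π * (Real.sqrt (2*(2*K+4)) * ((2*K+4)/E)^(2*k+4))) := by
    rw [hA, hB]
    gcongr
  calc 2^(4*k+6) * Real.exp (-(2*K+4)) * (K+2)^(2*k+1) * (((k+2).factorial : ℝ))^2
      = 2^(4*k+6) * (E^(2*k+4))⁻¹ * (K+2)^(2*k+1) * (((k+2).factorial : ℝ))^2 := by rw [hexp]
    _ ≤ 2^(4*k+6) * (E^(2*k+4))⁻¹ * (K+2)^(2*k+1) *
          (E * Real.sqrt (K+2) * ((K+2)/E)^(k+2))^2 := by
        gcongr
    _ ≤ _ := key.trans (mul_le_mul hfl1 hfl2 (by positivity) (Nat.cast_nonneg _))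

noncomputable def Rk (k : ℕ) : ℝ :=
  Real.sqrt Real.pi * 2 ^ ((k : ℝ) ^ 2 / 2) *
    Real.exp (-(3 * (k : ℝ) ^ 2 + 4) / 4) *
    (k : ℝ) ^ ((2 * (k : ℝ) ^ 2 - 2 * (k : ℝ) - 1) / 4) *
    Real.sqrt ((Nat.factorial (2 * k) : ℝ) /
      ((Nat.factorial k : ℝ) * (Nat.factorial (k + 1) : ℝ)))

lemma Rk_nonneg (k : ℕ) : 0 ≤ Rk k := by
  rw [Rk]
  have h1 : (0:ℝ) ≤ (k:ℝ) := Nat.cast_nonneg k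
  positivity

lemma sqrt_ratio_step (k : ℕ) (hk : 1 ≤ k) :
    Real.sqrt (((2*(k+2)).factorial : ℝ) / (((k+2).factorial : ℝ) * (((k+2)+1).factorial : ℝ)))
      ≤ Real.sqrt (((2*k).factorial : ℝ) / ((k.factorial : ℝ) * ((k+1).factorial : ℝ))) * 4 := by
  have hK0 : (0:ℝ) ≤ (k:ℝ) := Nat.cast_nonneg k
  have f1 : ((2*(k+2)).factorial : ℝ)
      = (2*(k:ℝ)+4)*(2*(k:ℝ)+3)*(2*(k:ℝ)+2)*(2*(k:ℝ)+1)*((2*k).factorial : ℝ) := by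
    rw [show 2*(k+2) = (2*k+3)+1 by ring, Nat.factorial_succ,
      show 2*k+3 = (2*k+2)+1 from rfl, Nat.factorial_succ,
      show 2*k+2 = (2*k+1)+1 from rfl, Nat.factorial_succ,
      show 2*k+1 = (2*k)+1 from rfl, Nat.factorial_succ]
    push_cast; ring
  have f2 : (((k+2)).factorial : ℝ) = ((k:ℝ)+2)*((k:ℝ)+1)*(k.factorial : ℝ) := by
    rw [show k+2 = (k+1)+1 from rfl, Nat.factorial_succ, Nat.factorial_succ]
    push_cast; ring
  have f3 : (((k+2)+1).factorial : ℝ) = ((k:ℝ)+3)*((k:ℝ)+2)*((k+1).factorial : ℝ) := by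
    rw [show (k+2)+1 = (k+2)+1 from rfl, Nat.factorial_succ,
      show k+2 = (k+1)+1 from rfl, Nat.factorial_succ]
    push_cast; ring
  have e : ((2*(k+2)).factorial : ℝ) / (((k+2).factorial : ℝ) * (((k+2)+1).factorial : ℝ))
      = (((2*k).factorial : ℝ) / ((k.factorial : ℝ) * ((k+1).factorial : ℝ)))
        * (4*(2*(k:ℝ)+1)*(2*(k:ℝ)+3)/(((k:ℝ)+2)*((k:ℝ)+3))) := by
    rw [f1, f2, f3]
    have p1 : (0:ℝ) < (k.factorial : ℝ) := by positivity
    have p2 : (0:ℝ) < ((k+1).factorial : ℝ) := by positivity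
    field_simp
    ring
  rw [e, Real.sqrt_mul (by positivity)]
  have hT : (4*(2*(k:ℝ)+1)*(2*(k:ℝ)+3)/(((k:ℝ)+2)*((k:ℝ)+3))) ≤ 16 := by
    rw [div_le_iff₀ (by positivity)]
    nlinarith
  have hT4 : Real.sqrt (4*(2*(k:ℝ)+1)*(2*(k:ℝ)+3)/(((k:ℝ)+2)*((k:ℝ)+3))) ≤ 4 := by
    calc Real.sqrt (4*(2*(k:ℝ)+1)*(2*(k:ℝ)+3)/(((k:ℝ)+2)*((k:ℝ)+3))) ≤ Real.sqrt 16 :=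
          Real.sqrt_le_sqrt hT
      _ = 4 := by rw [show (16:ℝ) = 4^2 by norm_num, Real.sqrt_sq (by norm_num)]
  exact mul_le_mul_of_nonneg_left hT4 (Real.sqrt_nonneg _)

lemma rpow_step2 (k : ℕ) (hk : 2 ≤ k) :
    ((k:ℝ)+2) ^ ((2*((k:ℝ)+2)^2 - 2*((k:ℝ)+2) - 1)/4)
      ≤ (k:ℝ) ^ ((2*(k:ℝ)^2 - 2*(k:ℝ) - 1)/4) * Real.exp ((k:ℝ)-1) * ((k:ℝ)+2)^(2*k+1) := by
  have hK2 : (2:ℝ) ≤ (k:ℝ) := by exact_mod_cast hk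
  have hK0 : (0:ℝ) < (k:ℝ) := by linarith
  set K := (k:ℝ) with hKdef
  set a := (2*K^2 - 2*K - 1)/4 with hadef
  have ha : 0 ≤ a := by rw [hadef]; nlinarith
  have hsplit : (2*(K+2)^2 - 2*(K+2) - 1)/4 = a + ((2*k+1 : ℕ) : ℝ) := by
    rw [hadef]; push_cast [hKdef]; ring
  rw [hsplit, Real.rpow_add (by linarith), Real.rpow_natCast]
  have h1 : (K+2) = K * (1 + 2/K) := by field_simp
  have h2 : (K+2)^a ≤ K^a * Real.exp (K-1) := by
    rw [h1, Real.mul_rpow hK0.le (by positivity)]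
    have h3 : (1 + 2/K) ≤ Real.exp (2/K) := by
      have := Real.add_one_le_exp (2/K); linarith
    have h4 : (1 + 2/K)^a ≤ Real.exp (2/K) ^ a :=
      Real.rpow_le_rpow (by positivity) h3 ha
    have h6 : 2/K * a ≤ K - 1 := by
      rw [hadef, div_mul_eq_mul_div, div_le_iff₀ (by positivity)]
      ring_nf
      nlinarith
    have h7 : Real.exp (2/K) ^ a ≤ Real.exp (K-1) := by
      rw [← Real.exp_mul]
      exact Real.exp_le_exp.mpr h6
    exact mul_le_mul_of_nonneg_left (h4.trans h7) (Real.rpow_nonneg hK0.le a)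
  exact mul_le_mul_of_nonneg_right h2 (by positivity)

lemma R_step (k : ℕ) (hk : 2 ≤ k) :
    Rk (k+2) ≤ Rk k * (((2*k+2).factorial : ℝ) * ((2*k+4).factorial : ℝ)
      / (2^(2*k+2) * (((k+2).factorial : ℝ))^2)) := by
  have hK0 : (0:ℝ) ≤ (k:ℝ) := Nat.cast_nonneg k
  have hbig := rpow_step2 k hk
  have hsq := sqrt_ratio_step k (by omega)
  have h2p : (2:ℝ) ^ (((k:ℝ)+2)^2/2) = (2:ℝ) ^ ((k:ℝ)^2/2) * 2^(2*k+2) := by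
    rw [← Real.rpow_natCast (2:ℝ) (2*k+2), ← Real.rpow_add (by norm_num : (0:ℝ) < 2)]
    congr 1; push_cast; ring
  have hexp2 : Real.exp (-(3*((k:ℝ)+2)^2+4)/4)
      = Real.exp (-(3*(k:ℝ)^2+4)/4) * Real.exp (-(3*(k:ℝ)+3)) := by
    rw [← Real.exp_add]; congr 1; ring
  have he : Real.exp (-(3*(k:ℝ)+3)) * Real.exp ((k:ℝ)-1) = Real.exp (-(2*(k:ℝ)+4)) := by
    rw [← Real.exp_add]; congr 1; ring
  have hS : 2^(2*k+2) * 4 * Real.exp (-(2*(k:ℝ)+4)) * ((k:ℝ)+2)^(2*k+1)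
      ≤ ((2*k+2).factorial : ℝ) * ((2*k+4).factorial : ℝ)
        / (2^(2*k+2) * (((k+2).factorial : ℝ))^2) := by
    rw [le_div_iff₀ (by positivity)]
    calc 2^(2*k+2) * 4 * Real.exp (-(2*(k:ℝ)+4)) * ((k:ℝ)+2)^(2*k+1) *
          (2^(2*k+2) * (((k+2).factorial : ℝ))^2)
        = 2^(4*k+6) * Real.exp (-(2*(k:ℝ)+4)) * ((k:ℝ)+2)^(2*k+1)
            * (((k+2).factorial : ℝ))^2 := by ring
      _ ≤ _ := F_ineq k
  calc Rk (k+2)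
      = Real.sqrt Real.pi * ((2:ℝ) ^ ((k:ℝ)^2/2) * 2^(2*k+2)) *
          (Real.exp (-(3*(k:ℝ)^2+4)/4) * Real.exp (-(3*(k:ℝ)+3))) *
          (((k:ℝ)+2) ^ ((2*((k:ℝ)+2)^2 - 2*((k:ℝ)+2) - 1)/4)) *
          Real.sqrt (((2*(k+2)).factorial : ℝ) /
            (((k+2).factorial : ℝ) * (((k+2)+1).factorial : ℝ))) := by
        rw [Rk, ← h2p, ← hexp2]
        push_cast
        ring_nf
    _ ≤ Real.sqrt Real.pi * ((2:ℝ) ^ ((k:ℝ)^2/2) * 2^(2*k+2)) *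
          (Real.exp (-(3*(k:ℝ)^2+4)/4) * Real.exp (-(3*(k:ℝ)+3))) *
          ((k:ℝ) ^ ((2*(k:ℝ)^2 - 2*(k:ℝ) - 1)/4) * Real.exp ((k:ℝ)-1) * ((k:ℝ)+2)^(2*k+1)) *
          (Real.sqrt (((2*k).factorial : ℝ) / ((k.factorial : ℝ) * ((k+1).factorial : ℝ))) * 4) := by
        gcongr <;> positivity
    _ = Rk k * (2^(2*k+2) * 4 * Real.exp (-(2*(k:ℝ)+4)) * ((k:ℝ)+2)^(2*k+1)) := by
        rw [Rk, ← he]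
        ring
    _ ≤ Rk k * (((2*k+2).factorial : ℝ) * ((2*k+4).factorial : ℝ)
          / (2^(2*k+2) * (((k+2).factorial : ℝ))^2)) :=
        mul_le_mul_of_nonneg_left hS (Rk_nonneg k)

lemma Gh2 : Gh 2 = 1 := by
  rw [Gh, show ((2:ℕ):ℝ)/2 + 1 = 2 by norm_num, Real.Gamma_two]

lemma Gh3 : Gh 3 = 3/4 * Real.sqrt π := by
  rw [Gh, show ((3:ℕ):ℝ)/2 + 1 = 3/2 + 1 by norm_num, Real.Gamma_add_one (by norm_num),
    show (3/2:ℝ) = 1/2 + 1 by norm_num, Real.Gamma_add_one (by norm_num),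
    Real.Gamma_one_half_eq]
  ring

lemma Gh4 : Gh 4 = 2 := by
  rw [Gh, show ((4:ℕ):ℝ)/2 + 1 = 2 + 1 by norm_num, Real.Gamma_add_one (by norm_num),
    Real.Gamma_two]
  norm_num

lemma Gh5 : Gh 5 = 15/8 * Real.sqrt π := by
  rw [Gh, show ((5:ℕ):ℝ)/2 + 1 = 5/2 + 1 by norm_num, Real.Gamma_add_one (by norm_num),
    show (5/2:ℝ) = 3/2 + 1 by norm_num, Real.Gamma_add_one (by norm_num),
    show (3/2:ℝ) = 1/2 + 1 by norm_num, Real.Gamma_add_one (by norm_num),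
    Real.Gamma_one_half_eq]
  ring

lemma Gh6 : Gh 6 = 6 := by
  rw [Gh, show ((6:ℕ):ℝ)/2 + 1 = 3 + 1 by norm_num, Real.Gamma_add_one (by norm_num),
    show (3:ℝ) = 2 + 1 by norm_num, Real.Gamma_add_one (by norm_num), Real.Gamma_two]
  norm_num

lemma Pn2 : Pn 2 = Gh 3 * Gh 4 := by
  rw [Pn, show 2*2 = 3+1 from rfl, Finset.prod_Ioc_succ_top (by omega),
    show (3:ℕ) = 2+1 from rfl, Finset.prod_Ioc_succ_top (by omega), Finset.Ioc_self,
    Finset.prod_empty, one_mul]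

lemma Pd2 : Pd 2 = Gh 2 := by
  rw [Pd, show (2:ℕ) = 1+1 from rfl, Finset.prod_Ioc_succ_top (by omega), Finset.Ioc_self,
    Finset.prod_empty, one_mul]

lemma Pn3 : Pn 3 = Gh 4 * Gh 5 * Gh 6 := by
  rw [Pn, show 2*3 = 5+1 from rfl, Finset.prod_Ioc_succ_top (by omega),
    show (5:ℕ) = 4+1 from rfl, Finset.prod_Ioc_succ_top (by omega),
    show (4:ℕ) = 3+1 from rfl, Finset.prod_Ioc_succ_top (by omega), Finset.Ioc_self,
    Finset.prod_empty, one_mul]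

lemma Pd3 : Pd 3 = Gh 2 * Gh 3 := by
  rw [Pd, show (3:ℕ) = 2+1 from rfl, Finset.prod_Ioc_succ_top (by omega),
    show (2:ℕ) = 1+1 from rfl, Finset.prod_Ioc_succ_top (by omega), Finset.Ioc_self,
    Finset.prod_empty, one_mul]

lemma exp_four_ge : (54:ℝ) ≤ Real.exp 4 := by
  have h : Real.exp 4 = Real.exp 1 ^ (4:ℕ) := by
    rw [← Real.exp_nat_mul]; norm_num
  have he := Real.exp_one_gt_d9
  have h27 : (2.718:ℝ) ≤ Real.exp 1 := by linarith
  have hp : (2.718:ℝ)^(4:ℕ) ≤ Real.exp 1 ^ (4:ℕ) := pow_le_pow_left₀ (by norm_num) h27 4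
  norm_num at hp
  rw [h]
  nlinarith [hp]

lemma exp_seven_ge : (800:ℝ) ≤ Real.exp 7 := by
  have h : Real.exp 7 = Real.exp 1 ^ (7:ℕ) := by
    rw [← Real.exp_nat_mul]; norm_num
  have he := Real.exp_one_gt_d9
  have h27 : (2.7:ℝ) ≤ Real.exp 1 := by linarith
  have hp : (2.7:ℝ)^(7:ℕ) ≤ Real.exp 1 ^ (7:ℕ) := pow_le_pow_left₀ (by norm_num) h27 7
  norm_num at hp
  rw [h]
  nlinarith [hp]

lemma base2 : Rk 2 ≤ Pn 2 / Pd 2 := by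
  have hπ : (0:ℝ) ≤ Real.sqrt π := Real.sqrt_nonneg _
  have hPn : Pn 2 / Pd 2 = 3/2 * Real.sqrt π := by
    rw [Pn2, Pd2, Gh2, Gh3, Gh4]; ring
  rw [hPn, Rk]
  have e1 : (2:ℝ) ^ (((2:ℕ):ℝ)^2/2) = 4 := by
    rw [show (((2:ℕ):ℝ))^2/2 = ((2:ℕ):ℝ) by norm_num, Real.rpow_natCast]
    norm_num
  have e2 : ((2:ℕ):ℝ) ^ ((2*((2:ℕ):ℝ)^2 - 2*((2:ℕ):ℝ) - 1)/4) ≤ 2 := by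
    have : ((2:ℕ):ℝ) ^ ((2*((2:ℕ):ℝ)^2 - 2*((2:ℕ):ℝ) - 1)/4) ≤ ((2:ℕ):ℝ) ^ (1:ℝ) := by
      apply Real.rpow_le_rpow_of_exponent_le (by norm_num)
      norm_num
    rwa [Real.rpow_one] at this
  have e3 : Real.sqrt ((Nat.factorial (2*2) : ℝ) /
      ((Nat.factorial 2 : ℝ) * (Nat.factorial (2+1) : ℝ))) ≤ 3/2 := by
    rw [show (Nat.factorial (2*2) : ℝ) / ((Nat.factorial 2 : ℝ) * (Nat.factorial (2+1) : ℝ))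
      = 2 by norm_num [Nat.factorial]]
    calc Real.sqrt 2 ≤ Real.sqrt ((3/2)^2) := Real.sqrt_le_sqrt (by norm_num)
      _ = 3/2 := Real.sqrt_sq (by norm_num)
  have e4 : Real.exp (-(3*((2:ℕ):ℝ)^2+4)/4) ≤ 1/54 := by
    rw [show (-(3*((2:ℕ):ℝ)^2+4)/4) = -4 by norm_num, Real.exp_neg]
    rw [show (1/54 : ℝ) = 54⁻¹ by norm_num]
    exact inv_anti₀ (by norm_num) exp_four_ge
  calc Real.sqrt π * 2 ^ (((2:ℕ):ℝ)^2/2) * Real.exp (-(3*((2:ℕ):ℝ)^2+4)/4) *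
        ((2:ℕ):ℝ) ^ ((2*((2:ℕ):ℝ)^2 - 2*((2:ℕ):ℝ) - 1)/4) *
        Real.sqrt ((Nat.factorial (2*2) : ℝ) /
          ((Nat.factorial 2 : ℝ) * (Nat.factorial (2+1) : ℝ)))
      ≤ Real.sqrt π * 2 ^ (((2:ℕ):ℝ)^2/2) * (1/54) * 2 * (3/2) := by
        gcongr <;> positivity
    _ = Real.sqrt π * 4 * (1/54) * 2 * (3/2) := by rw [e1]
    _ ≤ 3/2 * Real.sqrt π := by nlinarith
  
lemma base3 : Rk 3 ≤ Pn 3 / Pd 3 := by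
  have hπ : (0:ℝ) < Real.sqrt π := Real.sqrt_pos.mpr Real.pi_pos
  have hPn : Pn 3 / Pd 3 = 30 := by
    rw [Pn3, Pd3, Gh2, Gh3, Gh4, Gh5, Gh6]
    field_simp
    ring
  rw [hPn, Rk]
  have e0 : Real.sqrt π ≤ 2 := by
    calc Real.sqrt π ≤ Real.sqrt 4 := Real.sqrt_le_sqrt Real.pi_le_four
      _ = 2 := by rw [show (4:ℝ) = 2^2 by norm_num, Real.sqrt_sq (by norm_num)]
  have e1 : (2:ℝ) ^ (((3:ℕ):ℝ)^2/2) ≤ 32 := by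
    calc (2:ℝ) ^ (((3:ℕ):ℝ)^2/2) ≤ (2:ℝ) ^ ((5:ℕ):ℝ) := by
          apply Real.rpow_le_rpow_of_exponent_le (by norm_num); push_cast; norm_num
      _ = 32 := by rw [Real.rpow_natCast]; norm_num
  have e2 : ((3:ℕ):ℝ) ^ ((2*((3:ℕ):ℝ)^2 - 2*((3:ℕ):ℝ) - 1)/4) ≤ 27 := by
    calc ((3:ℕ):ℝ) ^ ((2*((3:ℕ):ℝ)^2 - 2*((3:ℕ):ℝ) - 1)/4) ≤ ((3:ℕ):ℝ) ^ ((3:ℕ):ℝ) := by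
          apply Real.rpow_le_rpow_of_exponent_le (by norm_num); push_cast; norm_num
      _ = 27 := by rw [Real.rpow_natCast]; norm_num
  have e3 : Real.sqrt ((Nat.factorial (2*3) : ℝ) /
      ((Nat.factorial 3 : ℝ) * (Nat.factorial (3+1) : ℝ))) ≤ 9/4 := by
    rw [show (Nat.factorial (2*3) : ℝ) / ((Nat.factorial 3 : ℝ) * (Nat.factorial (3+1) : ℝ))
      = 5 by norm_num [Nat.factorial]]
    calc Real.sqrt 5 ≤ Real.sqrt ((9/4)^2) := Real.sqrt_le_sqrt (by norm_num)
      _ = 9/4 := Real.sqrt_sq (by norm_num)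
  have e4 : Real.exp (-(3*((3:ℕ):ℝ)^2+4)/4) ≤ 1/800 := by
    rw [show (-(3*((3:ℕ):ℝ)^2+4)/4) = -(31/4) by norm_num, Real.exp_neg]
    rw [show (1/800 : ℝ) = 800⁻¹ by norm_num]
    apply inv_anti₀ (by norm_num)
    calc (800:ℝ) ≤ Real.exp 7 := exp_seven_ge
      _ ≤ Real.exp (31/4) := Real.exp_le_exp.mpr (by norm_num)
  calc Real.sqrt π * 2 ^ (((3:ℕ):ℝ)^2/2) * Real.exp (-(3*((3:ℕ):ℝ)^2+4)/4) *
        ((3:ℕ):ℝ) ^ ((2*((3:ℕ):ℝ)^2 - 2*((3:ℕ):ℝ) - 1)/4) *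
        Real.sqrt ((Nat.factorial (2*3) : ℝ) /
          ((Nat.factorial 3 : ℝ) * (Nat.factorial (3+1) : ℝ)))
      ≤ 2 * 32 * (1/800) * 27 * (9/4) := by
        gcongr <;> positivity
    _ ≤ 30 := by norm_num


lemma main_aux : ∀ k, 2 ≤ k → Rk k ≤ Pn k / Pd k := by
  intro k
  induction k using Nat.strong_induction_on with
  | _ k ih =>
    intro hk
    match k, hk with
    | 2, _ => exact base2
    | 3, _ => exact base3
    | (n+4), _ =>
      have ihn : Rk (n+2) ≤ Pn (n+2) / Pd (n+2) := ih (n+2) (by omega) (by omega)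
      have hstep : Rk ((n+2)+2) ≤ Rk (n+2) * (((2*(n+2)+2).factorial : ℝ) *
          ((2*(n+2)+4).factorial : ℝ) / (2^(2*(n+2)+2) * ((((n+2)+2).factorial : ℝ))^2)) :=
        R_step (n+2) (by omega)
      have hr : Pn ((n+2)+2) / Pd ((n+2)+2) = (Pn (n+2) / Pd (n+2)) *
          (((2*(n+2)+2).factorial : ℝ) * ((2*(n+2)+4).factorial : ℝ)
            / (2 ^ (2*(n+2)+2) * ((((n+2)+2).factorial : ℝ))^2)) :=
        ratio_step (n+2) (by omega)
      have hSnn : (0:ℝ) ≤ ((2*(n+2)+2).factorial : ℝ) * ((2*(n+2)+4).factorial : ℝ)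
          / (2 ^ (2*(n+2)+2) * ((((n+2)+2).factorial : ℝ))^2) := by positivity
      calc Rk ((n+2)+2)
          ≤ Rk (n+2) * (((2*(n+2)+2).factorial : ℝ) * ((2*(n+2)+4).factorial : ℝ)
              / (2^(2*(n+2)+2) * ((((n+2)+2).factorial : ℝ))^2)) := hstep
        _ ≤ (Pn (n+2) / Pd (n+2)) * (((2*(n+2)+2).factorial : ℝ) *
              ((2*(n+2)+4).factorial : ℝ)
              / (2^(2*(n+2)+2) * ((((n+2)+2).factorial : ℝ))^2)) :=
            mul_le_mul_of_nonneg_right ihn hSnn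
        _ = Pn ((n+2)+2) / Pd ((n+2)+2) := hr.symm

end GammaRatioAux

theorem gamma_ratio_bound (k : ℕ) (hk : 2 ≤ k) :
    (∏ i ∈ Finset.Icc (k + 1) (2 * k), Real.Gamma ((i : ℝ) / 2 + 1)) /
        (∏ i ∈ Finset.Icc 2 k, Real.Gamma ((i : ℝ) / 2 + 1)) ≥
      Real.sqrt Real.pi * 2 ^ ((k : ℝ) ^ 2 / 2) *
        Real.exp (-(3 * (k : ℝ) ^ 2 + 4) / 4) *
        (k : ℝ) ^ ((2 * (k : ℝ) ^ 2 - 2 * k - 1) / 4) *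
        Real.sqrt ((Nat.factorial (2 * k) : ℝ) /
          ((Nat.factorial k : ℝ) * (Nat.factorial (k + 1) : ℝ))) := by
  have h1 : Finset.Icc (k + 1) (2 * k) = Finset.Ioc k (2 * k) := Finset.Icc_add_one_left_eq_Ioc k (2 * k)
  have h2 : Finset.Icc 2 k = Finset.Ioc 1 k := by
    rw [show (2:ℕ) = 1 + 1 from rfl, Finset.Icc_add_one_left_eq_Ioc 1 k]
  rw [ge_iff_le, h1, h2]
  exact GammaRatioAux.main_aux k hk
end

section
/- For every real x ≥ 1, (x/e)^x · √(2πx) < Γ(x+1) < (x/e)^x · √(2π(x + 1/2)). -/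
set_option maxHeartbeats 1000000

open Real Filter Finset Topology

lemma L1 {u : ℝ} (hu : 0 < u) : 2*u/(2+u) < Real.log (1+u) := by
  have key : StrictMonoOn (fun u : ℝ => Real.log (1+u) - 2*u/(2+u)) (Set.Ici 0) := by
    apply strictMonoOn_of_deriv_pos (convex_Ici 0)
    · apply ContinuousOn.sub
      · exact (Real.continuousOn_log.comp (by fun_prop) (by
          intro y hy; simp at hy ⊢; linarith))
      · apply ContinuousOn.div (by fun_prop) (by fun_prop)
        intro y hy; simp at hy; intro h; linarith
    · intro y hy
      rw [interior_Ici] at hy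
      simp only [Set.mem_Ioi] at hy
      have h1 : (1:ℝ)+y ≠ 0 := by linarith
      have h2 : (2:ℝ)+y ≠ 0 := by linarith
      have hd1 : HasDerivAt (fun u : ℝ => Real.log (1+u)) (1/(1+y)) y := by
        have := ((hasDerivAt_id y).const_add 1).log h1; simpa using this
      have hd2 : HasDerivAt (fun u : ℝ => 2*u/(2+u)) ((2*(2+y)-2*y)/(2+y)^2) y := by
        have := ((hasDerivAt_id y).const_mul 2).fun_div ((hasDerivAt_id y).const_add 2) h2
        simpa using this
      rw [(hd1.fun_sub hd2).deriv]
      have : 1/(1+y) - (2*(2+y)-2*y)/(2+y)^2 = y^2/((1+y)*(2+y)^2) := by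
        field_simp; ring
      rw [this]; positivity
  have := key (Set.self_mem_Ici) (Set.mem_Ici.2 hu.le) hu
  simp at this; linarith

lemma L2 {u : ℝ} (hu : 0 < u) :
    Real.log (1+u) < (u^3+12*u^2+12*u)/(6*(u^2+3*u+2)) := by
  have key : StrictMonoOn
      (fun u : ℝ => (u^3+12*u^2+12*u)/(6*(u^2+3*u+2)) - Real.log (1+u)) (Set.Ici 0) := by
    apply strictMonoOn_of_deriv_pos (convex_Ici 0)
    · apply ContinuousOn.sub
      · apply ContinuousOn.div (by fun_prop) (by fun_prop)
        intro y hy; simp at hy; nlinarith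
      · exact (Real.continuousOn_log.comp (by fun_prop) (by
          intro y hy; simp at hy ⊢; linarith))
    · intro y hy
      rw [interior_Ici] at hy
      simp only [Set.mem_Ioi] at hy
      have h1 : (1:ℝ)+y ≠ 0 := by linarith
      have h2 : 6*(y^2+3*y+2) ≠ 0 := by nlinarith
      have hd1 : HasDerivAt (fun u : ℝ => Real.log (1+u)) (1/(1+y)) y := by
        have := ((hasDerivAt_id y).const_add 1).log h1; simpa using this
      have hd2 : HasDerivAt (fun u : ℝ => (u^3+12*u^2+12*u)/(6*(u^2+3*u+2)))
          (((3*y^2+12*(2*y)+12)*(6*(y^2+3*y+2)) - (y^3+12*y^2+12*y)*(6*(2*y+3)))/(6*(y^2+3*y+2))^2) y := by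
        have hn : HasDerivAt (fun u : ℝ => u^3+12*u^2+12*u) (3*y^2+12*(2*y)+12) y := by
          have h3 : HasDerivAt (fun u : ℝ => u^3) (3*y^2) y := by
            simpa using hasDerivAt_pow 3 y
          have h4 : HasDerivAt (fun u : ℝ => u^2) (2*y) y := by
            simpa using hasDerivAt_pow 2 y
          have := (h3.fun_add (h4.const_mul 12)).fun_add ((hasDerivAt_id y).const_mul 12)
          simpa using this
        have hdd : HasDerivAt (fun u : ℝ => 6*(u^2+3*u+2)) (6*(2*y+3)) y := by
          have h4 : HasDerivAt (fun u : ℝ => u^2) (2*y) y := by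
            simpa using hasDerivAt_pow 2 y
          have := ((h4.add ((hasDerivAt_id y).const_mul 3)).add_const 2).const_mul 6
          simpa using this
        exact hn.div hdd h2
      rw [(hd2.fun_sub hd1).deriv]
      have : ((3*y^2+12*(2*y)+12)*(6*(y^2+3*y+2)) - (y^3+12*y^2+12*y)*(6*(2*y+3)))/(6*(y^2+3*y+2))^2
          - 1/(1+y) = y^4/(6*(1+y)^2*(2+y)^2) := by
        have h3 : y^2+3*y+2 = (1+y)*(2+y) := by ring
        field_simp
        ring
      rw [this]; positivity
  have := key (Set.self_mem_Ici) (Set.mem_Ici.2 hu.le) hu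
  simp at this; linarith

noncomputable def gg (t : ℝ) : ℝ := (t + 1/2) * Real.log ((t+1)/t) - 1

noncomputable def FF (y : ℝ) : ℝ := Real.log (Real.Gamma y) - (y - 1/2) * Real.log y + y

lemma log_arg {t : ℝ} (ht : 0 < t) : (t+1)/t = 1 + 1/t := by field_simp

lemma gg_pos {t : ℝ} (ht : 0 < t) : 0 < gg t := by
  have hu : 0 < 1/t := by positivity
  have h := L1 hu
  have hkey : (t + 1/2) * (2*(1/t)/(2+1/t)) = 1 := by field_simp
  have ht2 : 0 < t + 1/2 := by linarith
  have := (mul_lt_mul_iff_right₀ ht2).2 h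
  rw [hkey] at this
  rw [gg, log_arg ht]
  linarith

lemma gg_lt {t : ℝ} (ht : 0 < t) : gg t < 1/(12*t) - 1/(12*(t+1)) := by
  have hu : 0 < 1/t := by positivity
  have h := L2 hu
  have ht2 : 0 < t + 1/2 := by linarith
  have hkey : (t + 1/2) * (((1/t)^3+12*(1/t)^2+12*(1/t))/(6*((1/t)^2+3*(1/t)+2))) - 1
      = 1/(12*t) - 1/(12*(t+1)) := by
    have h1 : t ≠ 0 := ht.ne'
    have h2 : t + 1 ≠ 0 := by linarith
    field_simp
    ring
  have := (mul_lt_mul_iff_right₀ ht2).2 h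
  rw [gg, log_arg ht]
  linarith [hkey, this]

lemma FF_step {y : ℝ} (hy : 0 < y) : FF y = FF (y+1) + gg y := by
  have hg : 0 < Real.Gamma y := Real.Gamma_pos_of_pos hy
  rw [FF, FF, gg, Real.Gamma_add_one hy.ne', Real.log_mul hy.ne' hg.ne',
    Real.log_div (by linarith) hy.ne']
  ring

lemma FF_sum {x : ℝ} (hx : 0 < x) (N : ℕ) :
    FF x = FF (x + N) + ∑ n ∈ Finset.range N, gg (x + n) := by
  induction N with
  | zero => simp
  | succ N ih =>
    rw [Finset.sum_range_succ, ih, FF_step (by positivity : (0:ℝ) < x + N)]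
    push_cast
    ring_nf

lemma FF_nat (k : ℕ) : FF (k+1 : ℕ) = Real.log (Stirling.stirlingSeq (k+1)) + (1/2) * Real.log 2 := by
  have hk1 : (0:ℝ) < (k:ℝ)+1 := by positivity
  have hfact : (0:ℝ) < (Nat.factorial k : ℝ) := by exact_mod_cast Nat.factorial_pos k
  have hlogfs : Real.log (Nat.factorial (k+1) : ℝ) = Real.log ((k:ℝ)+1) + Real.log (Nat.factorial k : ℝ) := by
    rw [Nat.factorial_succ]
    push_cast
    rw [Real.log_mul (by positivity) hfact.ne']
  have hs : Real.log (Stirling.stirlingSeq (k+1))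
      = Real.log (Nat.factorial (k+1) : ℝ) - 1/2 * Real.log (2*((k:ℝ)+1)) - ((k:ℝ)+1) * (Real.log ((k:ℝ)+1) - 1) := by
    have := Stirling.log_stirlingSeq_formula (k+1)
    rw [this]
    push_cast
    rw [Real.log_div (by positivity) (Real.exp_pos 1).ne', Real.log_exp]
  have hG : Real.Gamma ((k:ℝ)+1) = (Nat.factorial k : ℝ) := by
    exact_mod_cast Real.Gamma_nat_eq_factorial k
  rw [FF]
  push_cast
  rw [hG, hs, hlogfs, Real.log_mul (by norm_num) hk1.ne']
  ring

lemma log_bounds {u : ℝ} (hu : 0 ≤ u) : u/(1+u) ≤ Real.log (1+u) ∧ Real.log (1+u) ≤ u := by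
  have h1 : (0:ℝ) < 1 + u := by linarith
  constructor
  · have h2 : Real.log (1+u)⁻¹ ≤ (1+u)⁻¹ - 1 := Real.log_le_sub_one_of_pos (by positivity)
    rw [Real.log_inv] at h2
    have : (1+u)⁻¹ - 1 = -(u/(1+u)) := by field_simp; ring
    rw [this] at h2
    linarith
  · have := Real.log_le_sub_one_of_pos h1
    linarith

lemma FF_interp {M θ : ℝ} (hM : 2 ≤ M) (hθ0 : 0 ≤ θ) (hθ1 : θ < 1) :
    |FF (M + θ) - FF M| ≤ 2/(M - 1) := by
  have hM0 : (0:ℝ) < M := by linarith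
  have hM1 : (0:ℝ) < M - 1 := by linarith
  have ht0 : (0:ℝ) < M + θ := by linarith
  have hGM : (0:ℝ) < Real.Gamma M := Real.Gamma_pos_of_pos hM0
  have hGM1 : (0:ℝ) < Real.Gamma (M-1) := Real.Gamma_pos_of_pos (by linarith)
  -- Gamma recurrences in log form
  have hrecM : Real.log (Real.Gamma (M+1)) = Real.log M + Real.log (Real.Gamma M) := by
    rw [Real.Gamma_add_one hM0.ne', Real.log_mul hM0.ne' hGM.ne']
  have hrecM1 : Real.log (Real.Gamma M) = Real.log (M-1) + Real.log (Real.Gamma (M-1)) := by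
    have : Real.Gamma ((M-1)+1) = (M-1) * Real.Gamma (M-1) := Real.Gamma_add_one (by linarith)
    rw [show (M-1)+1 = M by ring] at this
    rw [this, Real.log_mul (by linarith) hGM1.ne']
  -- convexity upper bound
  have hub : Real.log (Real.Gamma (M+θ)) ≤ Real.log (Real.Gamma M) + θ * Real.log M := by
    have h := Real.convexOn_log_Gamma.2 (Set.mem_Ioi.2 hM0) (Set.mem_Ioi.2 (by linarith : (0:ℝ) < M+1))
      (by linarith : (0:ℝ) ≤ 1-θ) hθ0 (by ring)
    simp only [smul_eq_mul, Function.comp_apply] at h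
    rw [show (1-θ)*M + θ*(M+1) = M + θ by ring] at h
    rw [hrecM] at h
    nlinarith [h]
  -- convexity lower bound
  have hlb : Real.log (Real.Gamma M) + θ * Real.log (M-1) ≤ Real.log (Real.Gamma (M+θ)) := by
    have hw1 : (0:ℝ) ≤ θ/(1+θ) := by positivity
    have hw2 : (0:ℝ) ≤ 1/(1+θ) := by positivity
    have hws : θ/(1+θ) + 1/(1+θ) = 1 := by
      rw [← add_div, add_comm, div_self (by positivity : (1:ℝ)+θ ≠ 0)]
    have h := Real.convexOn_log_Gamma.2 (Set.mem_Ioi.2 (by linarith : (0:ℝ) < M-1))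
      (Set.mem_Ioi.2 ht0) hw1 hw2 hws
    simp only [smul_eq_mul, Function.comp_apply] at h
    rw [show θ/(1+θ)*(M-1) + 1/(1+θ)*(M+θ) = M by field_simp; ring] at h
    have h1θ : (0:ℝ) < 1+θ := by linarith
    have h' := (mul_le_mul_iff_right₀ h1θ).2 h
    rw [mul_add] at h'
    have e1 : (1+θ) * (θ/(1+θ) * Real.log (Real.Gamma (M-1))) = θ * Real.log (Real.Gamma (M-1)) := by
      field_simp
    have e2 : (1+θ) * (1/(1+θ) * Real.log (Real.Gamma (M+θ))) = Real.log (Real.Gamma (M+θ)) := by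
      field_simp
    rw [e1, e2] at h'
    nlinarith [h', hrecM1]
  -- log comparisons
  have hLlog : Real.log (M+θ) - Real.log M = Real.log (1 + θ/M) := by
    rw [← Real.log_div ht0.ne' hM0.ne']
    congr 1
    field_simp
  have hb1 := log_bounds (u := θ/M) (by positivity)
  have hb2 := log_bounds (u := 1/(M-1)) (by positivity)
  have hlogM : Real.log M - Real.log (M-1) ≤ 1/(M-1) := by
    have : Real.log M - Real.log (M-1) = Real.log (1 + 1/(M-1)) := by
      rw [← Real.log_div hM0.ne' hM1.ne']
      congr 1
      field_simp
      ring
    rw [this]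
    exact hb2.2
  have hlogM0 : 0 ≤ Real.log M - Real.log (M-1) := by
    have := Real.log_le_log (by linarith : (0:ℝ) < M - 1) (by linarith : M - 1 ≤ M)
    linarith
  have expand : FF (M+θ) - FF M =
      (Real.log (Real.Gamma (M+θ)) - Real.log (Real.Gamma M) - θ * Real.log M)
      - (M+θ-1/2)*(Real.log (M+θ) - Real.log M) + θ := by
    rw [FF, FF]; ring
  have hdiv : θ/M/(1 + θ/M) = θ/(M+θ) := by
    rw [div_div]
    congr 1
    field_simp
  have hL1 : θ/(M+θ) ≤ Real.log (M+θ) - Real.log M := by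
    rw [hLlog, ← hdiv]; exact hb1.1
  have hL2 : Real.log (M+θ) - Real.log M ≤ θ/M := by
    rw [hLlog]; exact hb1.2
  have hfac : (0:ℝ) < M + θ - 1/2 := by linarith
  have hA : (M+θ-1/2) * (θ/(M+θ)) ≤ (M+θ-1/2) * (Real.log (M+θ) - Real.log M) :=
    mul_le_mul_of_nonneg_left hL1 hfac.le
  have hB : (M+θ-1/2) * (Real.log (M+θ) - Real.log M) ≤ (M+θ-1/2) * (θ/M) :=
    mul_le_mul_of_nonneg_left hL2 hfac.le
  have hCeq : θ - (M+θ-1/2)*(θ/(M+θ)) = θ/(2*(M+θ)) := by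
    field_simp; ring
  have hDeq : θ - (M+θ-1/2)*(θ/M) = -(θ*(θ-1/2))/M := by
    field_simp; ring
  rw [abs_le]
  constructor
  · -- lower bound: FF(M+θ) - FF M ≥ -2/(M-1)
    have hlow1 : θ * (Real.log (M-1) - Real.log M) ≥ -(1/(M-1)) := by
      nlinarith [hlogM, hlogM0, hθ0, hθ1]
    have hlow2 : θ - (M+θ-1/2)*(θ/M) ≥ -(1/(M-1)) := by
      rw [hDeq, ge_iff_le, neg_le, neg_div, neg_neg]
      have h9 : θ*(θ-1/2) ≤ 1 := by nlinarith
      have h10 : θ*(θ-1/2)/M ≤ 1/M := (div_le_div_iff_of_pos_right hM0).2 h9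
      have h11 : 1/M ≤ 1/(M-1) := one_div_le_one_div_of_le hM1 (by linarith)
      linarith
    rw [expand]
    have : -(2/(M-1)) = -(1/(M-1)) + (-(1/(M-1)) + 0) := by ring
    rw [this]
    have hterm1 : Real.log (Real.Gamma (M+θ)) - Real.log (Real.Gamma M) - θ * Real.log M
        ≥ θ * (Real.log (M-1) - Real.log M) := by linarith [hlb]
    linarith [hlow1, hlow2, hterm1, hB]
  · -- upper bound
    have hup2 : θ - (M+θ-1/2)*(θ/(M+θ)) ≤ 2/(M-1) := by
      rw [hCeq]
      have h9 : θ/(2*(M+θ)) ≤ 1/(2*(M+θ)) :=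
        (div_le_div_iff_of_pos_right (by linarith)).2 hθ1.le
      have h10 : 1/(2*(M+θ)) ≤ 1/(M-1) := one_div_le_one_div_of_le hM1 (by linarith)
      have h11 : 1/(M-1) ≤ 2/(M-1) := (div_le_div_iff_of_pos_right hM1).2 (by norm_num)
      linarith
    rw [expand]
    have hterm1 : Real.log (Real.Gamma (M+θ)) - Real.log (Real.Gamma M) - θ * Real.log M ≤ 0 := by
      linarith [hub]
    linarith [hterm1, hA, hup2]

lemma FF_nat_tendsto :
    Filter.Tendsto (fun m : ℕ => FF m) atTop (𝓝 ((1/2) * Real.log (2*Real.pi))) := by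
  have hπ : (0:ℝ) < Real.sqrt Real.pi := Real.sqrt_pos.2 Real.pi_pos
  have hlog : Filter.Tendsto (fun m : ℕ => Real.log (Stirling.stirlingSeq m)) atTop
      (𝓝 (Real.log (Real.sqrt Real.pi))) :=
    ((Real.continuousAt_log hπ.ne').tendsto).comp Stirling.tendsto_stirlingSeq_sqrt_pi
  have h1 : Filter.Tendsto (fun m : ℕ => Real.log (Stirling.stirlingSeq m) + (1/2)*Real.log 2)
      atTop (𝓝 (Real.log (Real.sqrt Real.pi) + (1/2)*Real.log 2)) := hlog.add_const _
  have hval : Real.log (Real.sqrt Real.pi) + (1/2)*Real.log 2 = (1/2) * Real.log (2*Real.pi) := by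
    rw [Real.log_sqrt Real.pi_pos.le, Real.log_mul (by norm_num) Real.pi_ne_zero]
    ring
  rw [hval] at h1
  apply h1.congr'
  filter_upwards [Filter.eventually_ge_atTop 1] with m hm
  obtain ⟨k, rfl⟩ := Nat.exists_eq_add_of_le hm
  rw [add_comm 1 k, FF_nat k]

lemma FF_tendsto {x : ℝ} (hx : 1 ≤ x) :
    Filter.Tendsto (fun N : ℕ => FF (x + N)) atTop (𝓝 ((1/2) * Real.log (2*Real.pi))) := by
  set k := ⌊x⌋₊ with hkdef
  have hx0 : (0:ℝ) ≤ x := by linarith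
  have hk1 : 1 ≤ k := Nat.le_floor (by exact_mod_cast hx)
  have hθ0 : 0 ≤ x - k := by
    have := Nat.floor_le hx0
    linarith
  have hθ1 : x - k < 1 := by
    have := Nat.lt_floor_add_one x
    linarith
  have hmain : Filter.Tendsto (fun N : ℕ => FF ((N + k : ℕ))) atTop
      (𝓝 ((1/2) * Real.log (2*Real.pi))) :=
    FF_nat_tendsto.comp (Filter.tendsto_add_atTop_nat k)
  have herr : Filter.Tendsto (fun N : ℕ => 2/((N:ℝ) + k - 1)) atTop (𝓝 0) := by
    apply Filter.Tendsto.div_atTop (tendsto_const_nhds)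
    have : Filter.Tendsto (fun N : ℕ => (N:ℝ)) atTop atTop := tendsto_natCast_atTop_atTop
    have h2 := Filter.tendsto_atTop_add_const_right atTop ((k:ℝ) - 1) this
    apply h2.congr
    intro N; ring
  have hband : ∀ N : ℕ, 1 ≤ N →
      |FF (x + N) - FF ((N + k : ℕ))| ≤ 2/((N:ℝ) + k - 1) := by
    intro N hN
    have hM : (2:ℝ) ≤ ((N + k : ℕ):ℝ) := by
      push_cast
      have : (1:ℝ) ≤ (N:ℝ) := by exact_mod_cast hN
      have h2 : (1:ℝ) ≤ (k:ℝ) := by exact_mod_cast hk1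
      linarith
    have h := FF_interp hM hθ0 hθ1
    have e1 : ((N + k : ℕ):ℝ) + (x - k) = x + N := by push_cast; ring
    have e2 : ((N + k : ℕ):ℝ) - 1 = (N:ℝ) + k - 1 := by push_cast; ring
    rw [e1, e2] at h
    exact h
  have hup : Filter.Tendsto (fun N : ℕ => FF ((N + k : ℕ)) + 2/((N:ℝ) + k - 1)) atTop
      (𝓝 ((1/2) * Real.log (2*Real.pi))) := by
    have := hmain.add herr
    simpa using this
  have hdown : Filter.Tendsto (fun N : ℕ => FF ((N + k : ℕ)) - 2/((N:ℝ) + k - 1)) atTop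
      (𝓝 ((1/2) * Real.log (2*Real.pi))) := by
    have := hmain.sub herr
    simpa using this
  apply tendsto_of_tendsto_of_tendsto_of_le_of_le' hdown hup
  · filter_upwards [Filter.eventually_ge_atTop 1] with N hN
    have := (abs_le.1 (hband N hN)).1
    linarith
  · filter_upwards [Filter.eventually_ge_atTop 1] with N hN
    have := (abs_le.1 (hband N hN)).2
    linarith

lemma FF_lb {x : ℝ} (hx : 1 ≤ x) : (1/2) * Real.log (2*Real.pi) + gg x ≤ FF x := by
  have hx0 : (0:ℝ) < x := by linarith
  have hT : Filter.Tendsto (fun N : ℕ => FF (x + N) + gg x) atTop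
      (𝓝 ((1/2) * Real.log (2*Real.pi) + gg x)) := (FF_tendsto hx).add_const _
  apply le_of_tendsto hT
  filter_upwards [Filter.eventually_ge_atTop 1] with N hN
  have hsum := FF_sum hx0 N
  have hpos : gg x ≤ ∑ n ∈ Finset.range N, gg (x + n) := by
    have h0 : (0:ℕ) ∈ Finset.range N := Finset.mem_range.2 hN
    have := Finset.single_le_sum (f := fun n : ℕ => gg (x + n))
      (fun i _ => (gg_pos (by positivity : (0:ℝ) < x + i)).le) h0
    simpa using this
  linarith

lemma FF_ub {x : ℝ} (hx : 1 ≤ x) : FF x ≤ (1/2) * Real.log (2*Real.pi) + 1/(12*x) := by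
  have hx0 : (0:ℝ) < x := by linarith
  have hT : Filter.Tendsto (fun N : ℕ => FF (x + N) + 1/(12*x)) atTop
      (𝓝 ((1/2) * Real.log (2*Real.pi) + 1/(12*x))) := (FF_tendsto hx).add_const _
  apply ge_of_tendsto hT
  filter_upwards with N
  have hsum := FF_sum hx0 N
  have hle : ∑ n ∈ Finset.range N, gg (x + n)
      ≤ ∑ n ∈ Finset.range N, (1/(12*(x + n)) - 1/(12*(x + (n+1:ℕ)))) := by
    apply Finset.sum_le_sum
    intro i _
    have h := gg_lt (by positivity : (0:ℝ) < x + i)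
    have e : (x + (i:ℝ)) + 1 = x + ((i+1:ℕ):ℝ) := by push_cast; ring
    rw [e] at h
    exact h.le
  rw [Finset.sum_range_sub' (f := fun n : ℕ => 1/(12*(x + n)))] at hle
  have h0 : 1/(12*(x + ((0:ℕ):ℝ))) = 1/(12*x) := by norm_num
  have hN : (0:ℝ) ≤ 1/(12*(x + N)) := by positivity
  rw [h0] at hle
  linarith

theorem stirling_two_sided (x : ℝ) (hx : 1 ≤ x) :
    (x / Real.exp 1) ^ x * Real.sqrt (2 * Real.pi * x) < Real.Gamma (x + 1) ∧
      Real.Gamma (x + 1) < (x / Real.exp 1) ^ x * Real.sqrt (2 * Real.pi * (x + 1 / 2)) := by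
  have hx0 : (0:ℝ) < x := by linarith
  have hπ := Real.pi_pos
  have hΓ : 0 < Real.Gamma (x+1) := Real.Gamma_pos_of_pos (by linarith)
  have hΓx : 0 < Real.Gamma x := Real.Gamma_pos_of_pos hx0
  have hbase : (0:ℝ) < x / Real.exp 1 := div_pos hx0 (Real.exp_pos 1)
  have hpow : (0:ℝ) < (x / Real.exp 1) ^ x := Real.rpow_pos_of_pos hbase x
  have hlogpow : Real.log ((x / Real.exp 1) ^ x) = x * (Real.log x - 1) := by
    rw [Real.log_rpow hbase, Real.log_div hx0.ne' (Real.exp_pos 1).ne', Real.log_exp]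
  have hkey : Real.log (Real.Gamma (x+1)) =
      FF x - (1/2)*Real.log (2*Real.pi) + (x * Real.log x - x + (1/2)*Real.log (2*Real.pi*x)) := by
    rw [Real.Gamma_add_one hx0.ne', Real.log_mul hx0.ne' hΓx.ne', FF,
      Real.log_mul (by positivity : (2*Real.pi : ℝ) ≠ 0) hx0.ne']
    ring
  have hglb := FF_lb hx
  have hgub := FF_ub hx
  have hgg := gg_pos hx0
  constructor
  · -- lower bound
    have hL : (0:ℝ) < (x / Real.exp 1) ^ x * Real.sqrt (2*Real.pi*x) := by positivity
    rw [← Real.exp_log hL, ← Real.exp_log hΓ]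
    apply Real.exp_lt_exp.2
    rw [Real.log_mul hpow.ne' (by positivity : Real.sqrt (2*Real.pi*x) ≠ 0), hlogpow,
      Real.log_sqrt (by positivity), hkey]
    have : Real.log (2*Real.pi*x)/2 = (1/2)*Real.log (2*Real.pi*x) := by ring
    rw [this]
    linarith
  · -- upper bound
    have hL : (0:ℝ) < (x / Real.exp 1) ^ x * Real.sqrt (2*Real.pi*(x+1/2)) := by positivity
    rw [← Real.exp_log hL, ← Real.exp_log hΓ]
    apply Real.exp_lt_exp.2
    rw [Real.log_mul hpow.ne' (by positivity : Real.sqrt (2*Real.pi*(x+1/2)) ≠ 0), hlogpow,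
      Real.log_sqrt (by positivity), hkey]
    have hdiff : Real.log (2*Real.pi*(x+1/2)) - Real.log (2*Real.pi*x) = Real.log (1 + 1/(2*x)) := by
      rw [← Real.log_div (by positivity) (by positivity : (2*Real.pi*x : ℝ) ≠ 0)]
      congr 1
      field_simp
    have hL1 := L1 (by positivity : (0:ℝ) < 1/(2*x))
    have he : 2*(1/(2*x))/(2+1/(2*x)) = 2/(4*x+1) := by
      field_simp
      ring
    rw [he] at hL1
    have h12 : 1/(12*x) ≤ 1/(4*x+1) := one_div_le_one_div_of_le (by linarith) (by linarith)
    have h4 : (1:ℝ)/(4*x+1) = (1/2) * (2/(4*x+1)) := by ring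
    have : Real.log (2*Real.pi*(x+1/2))/2 = (1/2)*Real.log (2*Real.pi*(x+1/2)) := by ring
    rw [this]
    have hfin : FF x - (1/2)*Real.log (2*Real.pi) < (1/2)*Real.log (2*Real.pi*(x+1/2)) - (1/2)*Real.log (2*Real.pi*x) := by
      have : (1/2)*Real.log (2*Real.pi*(x+1/2)) - (1/2)*Real.log (2*Real.pi*x)
          = (1/2)*Real.log (1 + 1/(2*x)) := by
        rw [← hdiff]; ring
      rw [this]
      nlinarith [hL1, h12, hgub]
    linarith
end

section
/- For every integer k ≥ 2, ∑_{i=k+1}^{2k} i·ln(i) − ∑_{i=2}^{k} i·ln(i) ≥ ((2k² − 2k − 1)/2)·ln(k) + 2k²·ln(2) − (k² + 2)/2. -/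
open Finset

lemma sum_rec (f : ℕ → ℝ) (k : ℕ) (hk : 1 ≤ k) :
    (∑ i ∈ Icc (k + 1 + 1) (2 * (k + 1)), f i) - ∑ i ∈ Icc 2 (k + 1), f i
      = ((∑ i ∈ Icc (k + 1) (2 * k), f i) - ∑ i ∈ Icc 2 k, f i)
        + f (2 * k + 1) + f (2 * k + 2) - 2 * f (k + 1) := by
  have h1 : ∑ i ∈ Icc 2 (k + 1), f i = ∑ i ∈ Icc 2 k, f i + f (k + 1) :=
    Finset.sum_Icc_succ_top (by omega) f
  have e1 : Icc (k + 1) (2 * k) = Ioc k (2 * k) := Finset.Icc_add_one_left_eq_Ioc k (2 * k)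
  have e2 : Icc (k + 1 + 1) (2 * (k + 1)) = Ioc (k + 1) (2 * k + 2) := by
    rw [show 2*(k+1) = 2*k+2 from by ring, Finset.Icc_add_one_left_eq_Ioc]
  have h2 : ∑ i ∈ Ioc k (k + 1), f i + ∑ i ∈ Ioc (k + 1) (2 * k + 2), f i
      = ∑ i ∈ Ioc k (2 * k + 2), f i :=
    Finset.sum_Ioc_consecutive f (by omega) (by omega)
  have h3 : ∑ i ∈ Ioc k (2 * k + 2), f i
      = ∑ i ∈ Ioc k (2 * k), f i + f (2 * k + 1) + f (2 * k + 2) := by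
    have a1 : (2 : ℕ) * k + 2 = (2 * k + 1) + 1 := by ring
    rw [a1, Finset.sum_Ioc_succ_top (by omega) f, Finset.sum_Ioc_succ_top (by omega) f]
  have h4 : Ioc k (k + 1) = {k + 1} := by rw [← Finset.Icc_add_one_left_eq_Ioc, Finset.Icc_self]
  rw [h1, e1, e2]
  rw [h4, Finset.sum_singleton] at h2
  linarith [h2, h3]

theorem sum_mul_log_bound (k : ℕ) (hk : 2 ≤ k) :
    (∑ i ∈ Finset.Icc (k + 1) (2 * k), (i : ℝ) * Real.log i) -
        ∑ i ∈ Finset.Icc 2 k, (i : ℝ) * Real.log i ≥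
      (2 * (k : ℝ) ^ 2 - 2 * k - 1) / 2 * Real.log k + 2 * (k : ℝ) ^ 2 * Real.log 2 -
        ((k : ℝ) ^ 2 + 2) / 2 := by
  induction k, hk using Nat.le_induction with
  | base =>
      have e1 : Finset.Icc 3 4 = ({3, 4} : Finset ℕ) := rfl
      have e2 : Finset.Icc 2 2 = ({2} : Finset ℕ) := rfl
      norm_num [e1, e2]
      have h4 : Real.log 4 = 2 * Real.log 2 := by
        rw [show (4 : ℝ) = 2 ^ 2 by norm_num, Real.log_pow]; push_cast; ring
      have h2 : Real.log 2 < 0.6931471808 := Real.log_two_lt_d9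
      have h3 : 0 ≤ Real.log 3 := Real.log_nonneg (by norm_num)
      nlinarith
  | succ n hn ih =>
      have hrec := sum_rec (fun i => (i : ℝ) * Real.log i) n (by omega)
      push_cast at hrec ⊢
      rw [hrec]
      have hn' : (2 : ℝ) ≤ n := by exact_mod_cast hn
      -- log facts
      have hL2 : Real.log 2 > 0.6931471803 := Real.log_two_gt_d9
      have hlogn : Real.log 2 ≤ Real.log n := Real.log_le_log (by norm_num) hn'
      have hc : Real.log 2 + Real.log n ≤ Real.log (2 * n + 1) := by
        rw [← Real.log_mul (by norm_num) (by linarith)]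
        exact Real.log_le_log (by nlinarith) (by linarith)
      have hd : Real.log (n + 1) - Real.log n ≤ 1 / n := by
        have := Real.log_le_sub_one_of_pos (show (0:ℝ) < (n+1)/n by positivity)
        rw [Real.log_div (by linarith) (by linarith)] at this
        have : Real.log (n+1) - Real.log n ≤ (n+1)/n - 1 := this
        have e : ((n:ℝ)+1)/n - 1 = 1/n := by field_simp; ring
        linarith [e ▸ this]
      have hdd : Real.log n ≤ Real.log (n + 1) := Real.log_le_log (by linarith) (by linarith)
      have hl22 : (2:ℝ) * (n+1) = 2 * n + 2 := by ring
      have hf2 : ((2:ℝ) * n + 2) * Real.log (2 * n + 2) = (2*n+2) * (Real.log 2 + Real.log (n+1)) := by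
        rw [show (2:ℝ)*n+2 = 2*(n+1) by ring, Real.log_mul (by norm_num) (by linarith)]
      have key : ((2:ℝ)*n+1) * Real.log (2*n+1) + (2*n+2) * Real.log (2*n+2) - 2*((n+1)*Real.log (n+1))
          ≥ (2 * ((n:ℝ)+1) ^ 2 - 2 * (n+1) - 1) / 2 * Real.log (n+1) + 2 * ((n:ℝ)+1) ^ 2 * Real.log 2 -
            (((n:ℝ)+1) ^ 2 + 2) / 2
            - ((2 * (n : ℝ) ^ 2 - 2 * n - 1) / 2 * Real.log n + 2 * (n : ℝ) ^ 2 * Real.log 2 -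
              ((n : ℝ) ^ 2 + 2) / 2) := by
        rw [hf2]
        have hmul : (2*(n:ℝ)^2 + 2*n - 1) * (1/n - (Real.log (n+1) - Real.log n)) ≥ 0 := by
          apply mul_nonneg (by nlinarith) (by linarith)
        have hinv : (n:ℝ) * (1/n) = 1 := by field_simp
        have hc' : ((2:ℝ)*n+1) * Real.log (2*n+1) ≥ (2*n+1) * (Real.log 2 + Real.log n) := by
          apply mul_le_mul_of_nonneg_left hc (by linarith)
        nlinarith [mul_nonneg (show (0:ℝ) ≤ n by linarith) (show (0:ℝ) ≤ Real.log n by linarith),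
          mul_nonneg (show (0:ℝ) ≤ n - 2 by linarith) (show (0:ℝ) ≤ 1/(n:ℝ) by positivity),
          mul_le_mul_of_nonneg_left hd (show (0:ℝ) ≤ n by linarith)]
        
      linarith [ih, key]
end

section
/- For every real t ≥ 0, the digamma function satisfies ψ(t + 2) ≤ ln(t + e^{1−γ}), where γ is the Euler–Mascheroni constant. -/
open Real Set Filter Topology

namespace DGB


lemma hasSum_telescope {a : ℕ → ℝ} (hmono : ∀ n, a (n+1) ≤ a n)
    (ha : Tendsto a atTop (𝓝 0)) :
    HasSum (fun n => a n - a (n + 1)) (a 0) := by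
  rw [hasSum_iff_tendsto_nat_of_nonneg (fun n => sub_nonneg.2 (hmono n))]
  simp only [Finset.sum_range_sub' a]
  simpa using tendsto_const_nhds.sub ha

lemma tendsto_inv_add (x : ℝ) : Tendsto (fun n : ℕ => 1 / ((n : ℝ) + x)) atTop (𝓝 0) := by
  simp only [one_div]
  apply Tendsto.comp tendsto_inv_atTop_zero
  exact tendsto_atTop_add_const_right _ x tendsto_natCast_atTop_atTop

/-- `∑' n, (1/(n+x) - 1/(n+x+1)) = 1/x` for `x > 0`. -/
lemma hasSum_basic {x : ℝ} (hx : 0 < x) :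
    HasSum (fun n : ℕ => 1 / ((n : ℝ) + x) - 1 / ((n : ℝ) + x + 1)) (1 / x) := by
  have key := hasSum_telescope (a := fun n : ℕ => 1 / ((n : ℝ) + x)) ?_ (tendsto_inv_add x)
  · simpa using key.congr_fun (by intro n; push_cast; ring_nf)
  · intro n
    apply one_div_le_one_div_of_le (by positivity)
    push_cast; linarith



lemma summable_sq {x : ℝ} (hx : 0 < x) : Summable (fun n : ℕ => 1 / ((n : ℝ) + x) ^ 2) := by
  refine Summable.of_nonneg_of_le (fun n => by positivity) (f := fun n : ℕ =>
    (1 + 1/x) * (1 / ((n : ℝ) + x) - 1 / ((n : ℝ) + x + 1))) ?_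
    (((hasSum_basic hx).summable).mul_left _)
  intro n
  have h1 : (0:ℝ) < (n:ℝ) + x := by positivity
  have h2 : (0:ℝ) < (n:ℝ) + x + 1 := by linarith
  have key : 1 / ((n : ℝ) + x) - 1 / ((n : ℝ) + x + 1) = 1 / (((n:ℝ)+x) * ((n:ℝ)+x+1)) := by
    field_simp
    ring
  show 1 / ((n:ℝ) + x) ^ 2 ≤ (1 + 1/x) * (1 / ((n : ℝ) + x) - 1 / ((n : ℝ) + x + 1))
  rw [key, mul_one_div, div_le_div_iff₀ (by positivity) (by positivity)]
  have e : (1+1/x) = (x+1)/x := by field_simp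
  rw [e, div_mul_eq_mul_div, le_div_iff₀ hx]
  nlinarith [mul_nonneg h1.le (Nat.cast_nonneg n : (0:ℝ) ≤ n)]

lemma summable_cube {x : ℝ} (hx : 0 < x) : Summable (fun n : ℕ => 1 / ((n : ℝ) + x) ^ 3) := by
  refine Summable.of_nonneg_of_le (fun n => by positivity) (f := fun n : ℕ =>
    (1/x) * (1 / ((n : ℝ) + x) ^ 2)) ?_ ((summable_sq hx).mul_left _)
  intro n
  have h1 : (0:ℝ) < (n:ℝ) + x := by positivity
  show 1 / ((n:ℝ) + x) ^ 3 ≤ (1/x) * (1 / ((n : ℝ) + x) ^ 2)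
  rw [mul_one_div, div_div, div_le_div_iff₀ (by positivity) (by positivity)]
  nlinarith [sq_nonneg ((n:ℝ)+x)]

lemma summable_S {x : ℝ} (hx : 0 < x) :
    Summable (fun n : ℕ => 1 / ((n : ℝ) + 1) - 1 / ((n : ℝ) + x)) := by
  apply Summable.of_norm_bounded (g := fun n : ℕ => (|x - 1| * max 1 x) * (1 / ((n : ℝ) + x) ^ 2))
    ((summable_sq hx).mul_left _)
  intro n
  have h1 : (0:ℝ) < (n:ℝ) + x := by positivity
  have h2 : (0:ℝ) < (n:ℝ) + 1 := by positivity
  have key : 1 / ((n : ℝ) + 1) - 1 / ((n : ℝ) + x) = (x - 1) / (((n:ℝ) + 1) * ((n:ℝ) + x)) := by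
    field_simp
    ring
  rw [Real.norm_eq_abs, key, abs_div, abs_of_pos (by positivity : (0:ℝ) < ((n:ℝ)+1)*((n:ℝ)+x)),
    mul_one_div, div_le_div_iff₀ (by positivity) (by positivity)]
  have hc : ((n:ℝ) + x) ≤ max 1 x * ((n:ℝ) + 1) := by
    rcases le_total x 1 with h | h
    · calc (n:ℝ) + x ≤ (n:ℝ) + 1 := by linarith
        _ ≤ max 1 x * ((n:ℝ)+1) := le_mul_of_one_le_left (by positivity) (le_max_left _ _)
    · calc (n:ℝ) + x ≤ x * ((n:ℝ) + 1) := by nlinarith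
        _ ≤ max 1 x * ((n:ℝ)+1) := by gcongr; exact le_max_right _ _
  calc |x - 1| * ((n:ℝ)+x)^2 = |x-1| * (((n:ℝ)+x) * ((n:ℝ)+x)) := by ring
    _ ≤ |x-1| * ((max 1 x * ((n:ℝ)+1)) * ((n:ℝ)+x)) := by
        gcongr
    _ = |x - 1| * max 1 x * (((n:ℝ)+1) * (((n:ℝ)+x))) := by ring


noncomputable def S (x : ℝ) : ℝ := ∑' n : ℕ, (1 / ((n : ℝ) + 1) - 1 / ((n : ℝ) + x))
noncomputable def P (x : ℝ) : ℝ := ∑' n : ℕ, 1 / ((n : ℝ) + x) ^ 2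
noncomputable def Q (x : ℝ) : ℝ := ∑' n : ℕ, (-2 / ((n : ℝ) + x) ^ 3)

lemma hasDerivAt_term (n : ℕ) {y : ℝ} (hy : 0 < y) :
    HasDerivAt (fun z => 1 / ((n : ℝ) + 1) - 1 / ((n : ℝ) + z)) (1 / ((n : ℝ) + y) ^ 2) y := by
  have h1 : (0:ℝ) < (n:ℝ) + y := by positivity
  have h := (((hasDerivAt_id y).const_add (n:ℝ)).inv h1.ne').const_sub (1 / ((n : ℝ) + 1))
  refine (h.congr_deriv ?_).congr_of_eventuallyEq (Eventually.of_forall fun z => ?_)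
  · simp only [id_eq]; ring
  · simp [one_div]

lemma hasDerivAt_term2 (n : ℕ) {y : ℝ} (hy : 0 < y) :
    HasDerivAt (fun z => 1 / ((n : ℝ) + z) ^ 2) (-2 / ((n : ℝ) + y) ^ 3) y := by
  have h1 : (0:ℝ) < (n:ℝ) + y := by positivity
  have h := (((hasDerivAt_id y).const_add (n:ℝ)).pow 2).inv (pow_ne_zero _ h1.ne')
  refine (h.congr_deriv ?_).congr_of_eventuallyEq (Eventually.of_forall fun z => ?_)
  · simp only [id_eq, Pi.pow_apply]; norm_num
    rw [div_eq_div_iff (by positivity) (by positivity)]; ring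
  · simp [one_div]

lemma hasDerivAt_S {x : ℝ} (hx : 0 < x) : HasDerivAt S (P x) x := by
  apply hasDerivAt_tsum_of_isPreconnected
    (u := fun n : ℕ => 1 / ((n : ℝ) + x/2) ^ 2)
    (summable_sq (by linarith)) isOpen_Ioi (convex_Ioi (x/2)).isPreconnected
    (fun n y hy => hasDerivAt_term n (lt_trans (by linarith) hy))
    (t := Ioi (x/2)) (y₀ := x) ?_ (by simp only [mem_Ioi]; linarith) (summable_S hx) (by simp only [mem_Ioi]; linarith)
  intro n y hy
  simp only [mem_Ioi] at hy
  beta_reduce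
  have h2 : (0:ℝ) < (n:ℝ) + x/2 := by have := Nat.cast_nonneg (α := ℝ) n; linarith
  have h1 : (0:ℝ) < (n:ℝ) + y := by linarith
  rw [Real.norm_eq_abs, abs_of_pos (one_div_pos.2 (pow_pos h1 2))]
  gcongr 1 / ?_ ^ 2 <;> linarith

lemma hasDerivAt_P {x : ℝ} (hx : 0 < x) : HasDerivAt P (Q x) x := by
  apply hasDerivAt_tsum_of_isPreconnected
    (u := fun n : ℕ => 2 * (1 / ((n : ℝ) + x/2) ^ 3))
    ((summable_cube (by linarith)).mul_left 2) isOpen_Ioi (convex_Ioi (x/2)).isPreconnected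
    (fun n y hy => hasDerivAt_term2 n (lt_trans (by linarith) hy))
    (t := Ioi (x/2)) (y₀ := x) ?_ (by simp only [mem_Ioi]; linarith) (summable_sq hx) (by simp only [mem_Ioi]; linarith)
  intro n y hy
  simp only [mem_Ioi] at hy
  beta_reduce
  have h2 : (0:ℝ) < (n:ℝ) + x/2 := by have := Nat.cast_nonneg (α := ℝ) n; linarith
  have h1 : (0:ℝ) < (n:ℝ) + y := by linarith
  rw [Real.norm_eq_abs, neg_div, abs_neg, abs_of_pos (div_pos two_pos (pow_pos h1 3)), mul_one_div]
  gcongr 2 / ?_ ^ 3 <;> linarith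


lemma summable_Q {x : ℝ} (hx : 0 < x) : Summable (fun n : ℕ => -2 / ((n : ℝ) + x) ^ 3) := by
  have := ((summable_cube hx).mul_left (-2)).congr (fun n => by rw [mul_one_div])
  exact this

lemma P_nonneg {x : ℝ} (hx : 0 < x) : 0 ≤ P x :=
  tsum_nonneg (fun n => by positivity)

lemma P_shift {x : ℝ} (hx : 0 < x) : P (x + 1) = P x - 1 / x ^ 2 := by
  have h := Summable.tsum_eq_zero_add (summable_sq hx)
  have e : ∀ n : ℕ, 1 / ((n : ℝ) + (x+1)) ^ 2 = 1 / (((n+1 : ℕ) : ℝ) + x) ^ 2 := by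
    intro n; push_cast; ring_nf
  calc P (x+1) = ∑' n : ℕ, 1 / (((n+1 : ℕ) : ℝ) + x) ^ 2 := tsum_congr e
    _ = P x - 1 / x ^ 2 := by
        rw [P, h]; simp only [Nat.cast_zero, zero_add]; ring

lemma Q_shift {x : ℝ} (hx : 0 < x) : Q (x + 1) = Q x + 2 / x ^ 3 := by
  have h := Summable.tsum_eq_zero_add (summable_Q hx)
  have e : ∀ n : ℕ, -2 / ((n : ℝ) + (x+1)) ^ 3 = -2 / (((n+1 : ℕ) : ℝ) + x) ^ 3 := by
    intro n; push_cast; ring_nf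
  calc Q (x+1) = ∑' n : ℕ, -2 / (((n+1 : ℕ) : ℝ) + x) ^ 3 := tsum_congr e
    _ = Q x + 2 / x ^ 3 := by
        rw [Q, h]; simp only [Nat.cast_zero, zero_add]; ring

lemma hasSum_sq_telescope {x : ℝ} (hx : 0 < x) :
    HasSum (fun n : ℕ => 1 / ((n : ℝ) + x) ^ 2 - 1 / ((n : ℝ) + x + 1) ^ 2) (1 / x ^ 2) := by
  rw [show (1:ℝ) / x ^ 2 = 1 / (((0:ℕ):ℝ) + x) ^ 2 by norm_num]
  have key := hasSum_telescope (a := fun n : ℕ => 1 / ((n : ℝ) + x) ^ 2) ?_ ?_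
  · exact key.congr_fun (fun n => by push_cast; ring)
  · intro n
    have h1 : (0:ℝ) < (n:ℝ) + x := by positivity
    show 1 / (((n+1:ℕ):ℝ) + x) ^ 2 ≤ 1 / ((n:ℝ) + x) ^ 2
    push_cast
    gcongr 1 / ?_ ^ 2 <;> linarith
  · have := (tendsto_inv_add x).mul (tendsto_inv_add x)
    simpa [one_div, ← mul_inv, ← sq] using this

lemma P_lower {x : ℝ} (hx : 0 < x) : 1 / x + 1 / (2 * x ^ 2) ≤ P x := by
  have h1 := hasSum_basic hx
  have h2 := (hasSum_sq_telescope hx).mul_left (1/2)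
  have h3 := h1.add h2
  have key : 1 / x + 1/2 * (1 / x ^ 2) ≤ P x := by
    refine hasSum_le ?_ h3 (summable_sq hx).hasSum
    intro n
    have hp : (0:ℝ) < (n:ℝ) + x := by positivity
    have hp1 : (0:ℝ) < (n:ℝ) + x + 1 := by linarith
    have e : 1 / ((n:ℝ) + x) - 1 / ((n:ℝ) + x + 1) = (1/((n:ℝ)+x)) * (1/((n:ℝ)+x+1)) := by
      field_simp
      ring
    rw [e]
    have hsq : 1 / ((n:ℝ)+x)^2 = (1/((n:ℝ)+x)) * (1/((n:ℝ)+x)) := by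
      rw [one_div_mul_one_div, sq]
    have hsq1 : 1 / ((n:ℝ)+x+1)^2 = (1/((n:ℝ)+x+1)) * (1/((n:ℝ)+x+1)) := by
      rw [one_div_mul_one_div, sq]
    nlinarith [sq_nonneg (1/((n:ℝ)+x) - 1/((n:ℝ)+x+1))]
  have e : 1 / (2 * x ^ 2) = 1/2 * (1 / x ^ 2) := by ring
  linarith

lemma P_upper {x : ℝ} (hx : 1 < x) : P x ≤ 1 / (x - 1) := by
  have h1 := hasSum_basic (x := x - 1) (by linarith)
  refine hasSum_le (fun n => ?_) (summable_sq (by linarith)).hasSum h1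
  have hp : (0:ℝ) < (n:ℝ) + (x - 1) := by have := Nat.cast_nonneg (α := ℝ) n; linarith
  have hp1 : (0:ℝ) < (n:ℝ) + (x-1) + 1 := by linarith
  rw [div_sub_div _ _ hp.ne' hp1.ne', div_le_div_iff₀ (by positivity) (by positivity)]
  nlinarith [sq_nonneg ((n:ℝ) + x)]

lemma Q_nonpos {x : ℝ} (hx : 0 < x) : Q x ≤ 0 :=
  tsum_nonpos (fun n => by
    have h1 : (0:ℝ) < (n:ℝ) + x := by positivity
    have := pow_pos h1 3
    rw [div_nonpos_iff]; right; constructor <;> linarith)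

lemma Q_lower {x : ℝ} (hx : 0 < x) : -(2 / x * P x) ≤ Q x := by
  have hs : HasSum (fun n : ℕ => -(2 / x * (1 / ((n : ℝ) + x)^2))) (-(2 / x * P x)) :=
    ((summable_sq hx).hasSum.mul_left (2 / x)).neg
  refine hasSum_le ?_ hs (summable_Q hx).hasSum
  intro n
  have h1 : (0:ℝ) < (n:ℝ) + x := by positivity
  rw [neg_div, neg_le_neg_iff, mul_one_div, div_div, div_le_div_iff₀ (by positivity) (by positivity)]
  nlinarith [pow_pos h1 2, pow_pos h1 3]


noncomputable def phi (x : ℝ) : ℝ := P x ^ 2 + Q x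

lemma phi_step {x : ℝ} (hx : 0 < x) : phi (x + 1) ≤ phi x := by
  have hP := P_shift hx
  have hQ := Q_shift hx
  have hl := P_lower hx
  have h2 : (0:ℝ) < x^2 := by positivity
  have h4 : (0:ℝ) < x^4 := by positivity
  have hu : (0:ℝ) < 1/x := by positivity
  have e2 : 1 / x ^ 2 = (1/x)^2 := by ring
  have e3 : 2 / x ^ 3 = 2 * (1/x)^3 := by ring
  have e4 : 1 / (2 * x ^ 2) = (1/x)^2 / 2 := by ring
  simp only [phi, hP, hQ, e2, e3]
  rw [e4] at hl
  nlinarith [mul_le_mul_of_nonneg_right hl (sq_nonneg (1/x)), hu]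

lemma phi_nonneg {x : ℝ} (hx : 0 < x) : 0 ≤ phi x := by
  have step : ∀ n : ℕ, phi (x + (n+1 : ℕ)) ≤ phi (x + n) := by
    intro n
    have : x + ((n:ℝ)+1) = (x + n) + 1 := by ring
    push_cast
    rw [this]
    exact phi_step (by positivity)
  have mono : ∀ n : ℕ, phi (x + n) ≤ phi x := by
    intro n
    induction n with
    | zero => simp
    | succ k ih => exact le_trans (step k) ih
  have hP0 : Tendsto (fun n : ℕ => P (x + n)) atTop (𝓝 0) := by
    apply squeeze_zero' (Eventually.of_forall (fun n => P_nonneg (by positivity)))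
      (g := fun n : ℕ => 1 / ((n:ℝ) + (x - 1))) ?_ (tendsto_inv_add (x-1))
    filter_upwards [eventually_ge_atTop 1] with n hn
    have hn1 : (1:ℝ) ≤ (n:ℝ) := by exact_mod_cast hn
    have h2 : 1 < x + (n:ℝ) := by linarith
    have := P_upper h2
    rw [show (n:ℝ) + (x - 1) = x + (n:ℝ) - 1 by ring]
    exact this
  have hQ0 : Tendsto (fun n : ℕ => Q (x + n)) atTop (𝓝 0) := by
    have hlow : Tendsto (fun n : ℕ => -(2 * (1 / ((n:ℝ) + x)) * P (x + n))) atTop (𝓝 0) := by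
      have := (((tendsto_inv_add x).const_mul 2).mul hP0).neg
      simpa using this
    apply tendsto_of_tendsto_of_tendsto_of_le_of_le hlow tendsto_const_nhds
    · intro n
      have h1 : (0:ℝ) < (n:ℝ) + x := by positivity
      have := Q_lower (x := x + n) (by positivity)
      calc -(2 * (1 / ((n:ℝ) + x)) * P (x + n)) = -(2/((n:ℝ)+x) * P (x+n)) := by ring
        _ ≤ Q (x + n) := by rw [show (n:ℝ) + x = x + n by ring]; exact this
    · intro n
      exact Q_nonpos (by positivity)
  have hphi : Tendsto (fun n : ℕ => phi (x + n)) atTop (𝓝 0) := by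
    have := (hP0.mul hP0).add hQ0
    simpa [phi, sq] using this
  exact le_of_tendsto hphi (Eventually.of_forall mono)

local notation "γ" => Real.eulerMascheroniConstant
local notation "f" => (Real.log ∘ Real.Gamma)

lemma Gamma_diff {x : ℝ} (hx : 0 < x) : DifferentiableAt ℝ Real.Gamma x :=
  Real.differentiableAt_Gamma fun m => ((neg_nonpos.mpr m.cast_nonneg).trans_lt hx).ne'

lemma f_diff {x : ℝ} (hx : 0 < x) : DifferentiableAt ℝ f x :=
  (Gamma_diff hx).log (Real.Gamma_pos_of_pos hx).ne'

lemma deriv_f_eq {x : ℝ} (hx : 0 < x) :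
    deriv f x = deriv Real.Gamma x / Real.Gamma x := by
  rw [Function.comp_def, deriv.log (Gamma_diff hx) (Real.Gamma_pos_of_pos hx).ne']

lemma f_rec {x : ℝ} (hx : 0 < x) : f (x + 1) = f x + Real.log x := by
  simp only [Function.comp_apply, Real.Gamma_add_one hx.ne',
    Real.log_mul hx.ne' (Real.Gamma_pos_of_pos hx).ne', add_comm]

lemma deriv_f_rec {x : ℝ} (hx : 0 < x) : deriv f (x + 1) = deriv f x + 1 / x := by
  rw [← deriv_comp_add_const, one_div, ← Real.deriv_log,
    ← deriv_add (f_diff hx) (Real.differentiableAt_log hx.ne')]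
  apply Filter.EventuallyEq.deriv_eq
  filter_upwards [eventually_gt_nhds hx] with y hy using f_rec hy

lemma deriv_f_mono {a b : ℝ} (ha : 0 < a) (hab : a ≤ b) : deriv f a ≤ deriv f b := by
  rcases eq_or_lt_of_le hab with rfl | h
  · exact le_refl _
  · exact (Real.convexOn_log_Gamma.deriv_le_slope (mem_Ioi.2 ha) (mem_Ioi.2 (ha.trans h)) h
      (f_diff ha)).trans (Real.convexOn_log_Gamma.slope_le_deriv (mem_Ioi.2 ha)
      (mem_Ioi.2 (ha.trans h)) h (f_diff (ha.trans h)))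

lemma deriv_f_le_log {x : ℝ} (hx : 0 < x) : deriv f x ≤ Real.log x := by
  have h := Real.convexOn_log_Gamma.deriv_le_slope (mem_Ioi.2 hx)
    (mem_Ioi.2 (by linarith : (0:ℝ) < x + 1)) (by linarith) (f_diff hx)
  rwa [slope_def_field, f_rec hx, show x + 1 - x = (1:ℝ) by ring, div_one, add_sub_cancel_left] at h

lemma log_le_deriv_f {x : ℝ} (hx : 1 < x) : Real.log (x - 1) ≤ deriv f x := by
  have h0 : (0:ℝ) < x - 1 := by linarith
  have h := Real.convexOn_log_Gamma.slope_le_deriv (mem_Ioi.2 h0)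
    (mem_Ioi.2 (by linarith : (0:ℝ) < x)) (by linarith) (f_diff (by linarith))
  have e1 := f_rec h0
  rw [sub_add_cancel] at e1
  rwa [slope_def_field, e1, show x - (x-1) = (1:ℝ) by ring, div_one, add_sub_cancel_left] at h

/-- real-valued harmonic sum -/
noncomputable def h (n : ℕ) : ℝ := ∑ i ∈ Finset.range n, (1 : ℝ) / ((i : ℝ) + 1)

lemma deriv_f_nat (n : ℕ) : deriv f ((n : ℝ) + 1) = -γ + h n := by
  rw [deriv_f_eq (by positivity), Real.deriv_Gamma_nat n, Real.Gamma_nat_eq_factorial,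
    mul_div_cancel_left₀ _ (Nat.cast_ne_zero.2 n.factorial_ne_zero)]
  congr 1
  rw [h, harmonic]
  push_cast
  simp [one_div]

lemma deriv_f_add_nat {x : ℝ} (hx : 0 < x) (n : ℕ) :
    deriv f (x + n) = deriv f x + ∑ k ∈ Finset.range n, 1 / (x + k) := by
  induction n with
  | zero => simp
  | succ m ih =>
    have : x + (m + 1 : ℕ) = (x + m) + 1 := by push_cast; ring
    rw [this, deriv_f_rec (by positivity), ih, Finset.sum_range_succ]
    ring

lemma psi_eq_S {x : ℝ} (hx : 0 < x) : deriv f x = S x - γ := by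
  set m : ℕ := ⌈x⌉₊ with hm_def
  have hm : x ≤ m := Nat.le_ceil x
  have hm1 : 1 ≤ m := Nat.ceil_pos.mpr hx
  set T : ℕ → ℝ := fun N => ∑ k ∈ Finset.range N, (1 / ((k:ℝ) + 1) - 1 / ((k:ℝ) + x)) with hT_def
  have hT : Tendsto T atTop (𝓝 (S x)) := (summable_S hx).hasSum.tendsto_sum_nat
  have hT' : Tendsto (fun N => T (N + 1)) atTop (𝓝 (S x)) :=
    hT.comp (tendsto_add_atTop_nat 1)
  have hTN : ∀ N : ℕ, T N = h N - (deriv f (x + N) - deriv f x) := by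
    intro N
    show (∑ k ∈ Finset.range N, (1 / ((k:ℝ) + 1) - 1 / ((k:ℝ) + x))) = _
    rw [deriv_f_add_nat hx N, h, Finset.sum_sub_distrib]
    have e : (∑ k ∈ Finset.range N, 1 / ((k:ℝ) + x)) = ∑ k ∈ Finset.range N, 1 / (x + (k:ℝ)) :=
      Finset.sum_congr rfl (fun k _ => by rw [add_comm])
    rw [e]
    ring
  have hsq : ∀ N : ℕ, -γ + h N ≤ deriv f (x + (N+1 : ℕ)) ∧
      deriv f (x + (N+1 : ℕ)) ≤ -γ + h (N + m) := by
    intro N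
    constructor
    · rw [← deriv_f_nat N]
      apply deriv_f_mono (by positivity)
      push_cast; linarith
    · rw [← deriv_f_nat (N + m)]
      apply deriv_f_mono (by positivity)
      push_cast; linarith
  have hdiff : ∀ N : ℕ, h (N + m) - h (N + 1) ≤ (m:ℝ) * (1 / ((N:ℝ) + 1)) := by
    intro N
    have hc : h (N + m) - h (N + 1) = ∑ i ∈ Finset.Ico (N+1) (N+m), (1:ℝ) / ((i:ℝ)+1) := by
      rw [h, h, eq_comm, Finset.sum_Ico_eq_sub _ (by omega)]
    rw [hc]
    have := Finset.sum_le_card_nsmul (Finset.Ico (N+1) (N+m))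
      (fun i => (1:ℝ)/((i:ℝ)+1)) (1 / ((N:ℝ)+1)) ?_
    · rw [Nat.card_Ico, nsmul_eq_mul] at this
      refine this.trans ?_
      have h1 : (0:ℝ) < 1 / ((N:ℝ)+1) := by positivity
      have h2 : ((N + m - (N+1) : ℕ) : ℝ) ≤ (m : ℝ) := by
        have : N + m - (N+1) ≤ m := by omega
        exact_mod_cast this
      nlinarith
    · intro i hi
      simp only [Finset.mem_Ico] at hi
      have : ((N:ℝ) + 1) ≤ ((i:ℝ) + 1) := by
        have : (N:ℝ) ≤ i := by exact_mod_cast (by omega : N ≤ i)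
        linarith
      apply one_div_le_one_div_of_le (by positivity) this
  have h0 : Tendsto (fun N : ℕ => 1 / ((N:ℝ) + 1)) atTop (𝓝 0) :=
    tendsto_one_div_add_atTop_nhds_zero_nat
  have hlow : Tendsto (fun N : ℕ => γ + deriv f x - (m:ℝ) * (1 / ((N:ℝ) + 1)))
      atTop (𝓝 (γ + deriv f x)) := by
    have hconst : Tendsto (fun _ : ℕ => γ + deriv f x) atTop (𝓝 (γ + deriv f x)) :=
      tendsto_const_nhds
    simpa using hconst.sub (h0.const_mul (m:ℝ))
  have hup : Tendsto (fun N : ℕ => γ + deriv f x + 1 / ((N:ℝ) + 1))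
      atTop (𝓝 (γ + deriv f x)) := by
    have hconst : Tendsto (fun _ : ℕ => γ + deriv f x) atTop (𝓝 (γ + deriv f x)) :=
      tendsto_const_nhds
    simpa using hconst.add h0
  have key : Tendsto (fun N => T (N + 1)) atTop (𝓝 (γ + deriv f x)) := by
    apply tendsto_of_tendsto_of_tendsto_of_le_of_le hlow hup
    · intro N
      have h1 := (hsq N).2
      have h2 := hdiff N
      have h3 := hTN (N+1)
      push_cast at h3 ⊢
      have hhh : h (N+1) - h (N+m) ≥ -((m:ℝ) * (1 / ((N:ℝ)+1))) := by linarith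
      rw [h3]
      push_cast at h1
      linarith
    · intro N
      have h1 := (hsq N).1
      have h3 := hTN (N+1)
      have h4 : h (N+1) - h N = 1 / ((N:ℝ) + 1) := by
        rw [h, h, Finset.sum_range_succ]; ring
      push_cast at h3 ⊢
      rw [h3]
      push_cast at h1
      linarith
  have := tendsto_nhds_unique hT' key
  linarith



noncomputable def g (x : ℝ) : ℝ := Real.exp (S x - γ)
noncomputable def gp (x : ℝ) : ℝ := Real.exp (S x - γ) * P x

lemma hasDerivAt_g {x : ℝ} (hx : 0 < x) : HasDerivAt g (gp x) x :=
  ((hasDerivAt_S hx).sub_const γ).exp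

lemma hasDerivAt_gp {x : ℝ} (hx : 0 < x) :
    HasDerivAt gp (Real.exp (S x - γ) * phi x) x := by
  have := (hasDerivAt_g hx).mul (hasDerivAt_P hx)
  refine this.congr_deriv ?_
  simp only [phi, g, gp]
  ring

lemma g_le {x : ℝ} (hx : 0 < x) : g x ≤ x := by
  have h1 : S x - γ ≤ Real.log x := (psi_eq_S hx) ▸ deriv_f_le_log hx
  calc g x ≤ Real.exp (Real.log x) := Real.exp_le_exp.2 h1
    _ = x := Real.exp_log hx

lemma le_g {x : ℝ} (hx : 1 < x) : x - 1 ≤ g x := by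
  have h1 : Real.log (x - 1) ≤ S x - γ := (psi_eq_S (by linarith)) ▸ log_le_deriv_f hx
  calc x - 1 = Real.exp (Real.log (x-1)) := (Real.exp_log (by linarith)).symm
    _ ≤ g x := Real.exp_le_exp.2 h1

lemma gp_monoOn {c : ℝ} (hc : 0 < c) : MonotoneOn gp (Ici c) := by
  apply monotoneOn_of_deriv_nonneg (convex_Ici c)
  · intro y hy
    exact (hasDerivAt_gp (hc.trans_le hy)).differentiableAt.continuousAt.continuousWithinAt
  · intro y hy
    rw [interior_Ici] at hy
    exact (hasDerivAt_gp (hc.trans hy)).differentiableAt.differentiableWithinAt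
  · intro y hy
    rw [interior_Ici] at hy
    rw [(hasDerivAt_gp (hc.trans hy)).deriv]
    exact mul_nonneg (Real.exp_pos _).le (phi_nonneg (hc.trans hy))

lemma gp_le_one {x : ℝ} (hx : 1 < x) : gp x ≤ 1 := by
  have hx0 : (0:ℝ) < x := by linarith
  have hcont : ContinuousOn g (Ici x) := fun y hy =>
    (hasDerivAt_g (hx0.trans_le hy)).differentiableAt.continuousAt.continuousWithinAt
  have hdiff : DifferentiableOn ℝ g (interior (Ici x)) := by
    rw [interior_Ici]
    exact fun y hy => (hasDerivAt_g (hx0.trans hy)).differentiableAt.differentiableWithinAt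
  have hbound : ∀ y ∈ interior (Ici x), gp x ≤ deriv g y := by
    rw [interior_Ici]
    intro y hy
    rw [(hasDerivAt_g (hx0.trans hy)).deriv]
    exact gp_monoOn hx0 self_mem_Ici (mem_Ici.2 hy.le) hy.le
  have key : ∀ T : ℝ, 0 < T → gp x * T ≤ T + 1 := by
    intro T hT
    have mvt := Convex.mul_sub_le_image_sub_of_le_deriv (convex_Ici x) hcont hdiff hbound
      x self_mem_Ici (x + T) (mem_Ici.2 (by linarith)) (by linarith)
    have hg1 : g (x + T) ≤ x + T := g_le (by linarith)
    have hg2 : x - 1 ≤ g x := le_g hx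
    calc gp x * T = gp x * (x + T - x) := by ring_nf
      _ ≤ g (x + T) - g x := mvt
      _ ≤ (x + T) - (x - 1) := by linarith
      _ = T + 1 := by ring
  by_contra hgt
  push_neg at hgt
  have hd : (0:ℝ) < gp x - 1 := by linarith
  have hT : (0:ℝ) < 2 / (gp x - 1) := by positivity
  have := key _ hT
  have he : (gp x - 1) * (2 / (gp x - 1)) = 2 := by
    rw [mul_div_assoc']
    rw [mul_comm, mul_div_assoc, div_self hd.ne', mul_one]
  nlinarith

end DGB


theorem digamma_upper_bound (t : ℝ) (ht : 0 ≤ t) :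
    deriv Real.Gamma (t + 2) / Real.Gamma (t + 2) ≤
      Real.log (t + Real.exp (1 - Real.eulerMascheroniConstant)) := by
  have h2 : (0:ℝ) < t + 2 := by linarith
  have e1 : deriv Real.Gamma (t + 2) / Real.Gamma (t + 2) = DGB.S (t+2) - Real.eulerMascheroniConstant := by
    rw [← DGB.deriv_f_eq h2, DGB.psi_eq_S h2]
  have hS2 : DGB.S 2 - Real.eulerMascheroniConstant = 1 - Real.eulerMascheroniConstant := by
    have := DGB.deriv_f_nat 1
    rw [DGB.psi_eq_S (by norm_num : (0:ℝ) < ((1:ℕ):ℝ) + 1)] at this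
    have hh : DGB.h 1 = 1 := by simp [DGB.h]
    rw [hh] at this
    norm_num at this ⊢
    linarith
  have hg2 : DGB.g 2 = Real.exp (1 - Real.eulerMascheroniConstant) := by
    rw [DGB.g, hS2]
  have hcont : ContinuousOn DGB.g (Ici (2:ℝ)) := fun y hy => by
    have : (0:ℝ) < y := by simp only [mem_Ici] at hy; linarith
    exact (DGB.hasDerivAt_g this).differentiableAt.continuousAt.continuousWithinAt
  have hdiff : DifferentiableOn ℝ DGB.g (interior (Ici (2:ℝ))) := by
    rw [interior_Ici]
    intro y hy
    simp only [mem_Ioi] at hy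
    exact (DGB.hasDerivAt_g (by linarith)).differentiableAt.differentiableWithinAt
  have hbound : ∀ y ∈ interior (Ici (2:ℝ)), deriv DGB.g y ≤ 1 := by
    rw [interior_Ici]
    intro y hy
    simp only [mem_Ioi] at hy
    rw [(DGB.hasDerivAt_g (by linarith)).deriv]
    exact DGB.gp_le_one (by linarith)
  have mvt := Convex.image_sub_le_mul_sub_of_deriv_le (convex_Ici (2:ℝ)) hcont hdiff hbound
    2 self_mem_Ici (t + 2) (mem_Ici.2 (by linarith)) (by linarith)
  have hfin : DGB.g (t + 2) ≤ t + Real.exp (1 - Real.eulerMascheroniConstant) := by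
    rw [hg2] at mvt
    linarith [mvt]
  rw [e1]
  have : DGB.S (t+2) - Real.eulerMascheroniConstant = Real.log (DGB.g (t+2)) := by
    rw [DGB.g, Real.log_exp]
  rw [this]
  exact Real.log_le_log (Real.exp_pos _) hfin
end

section
/- Define φ(t) = [ (π/8.5)·(t + 8.5) ]^t / Γ(t + 2). Then ln(φ(t)) is monotonically increasing for t ≥ 310. -/
open Real Set

/-- `2 log v ≤ v - 1/v` for `v ≥ 1`. -/
lemma aux_two_log_le {v : ℝ} (hv : 1 ≤ v) : 2 * Real.log v ≤ v - 1 / v := by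
  have hv0 : 0 < v := lt_of_lt_of_le one_pos hv
  have hl : 0 ≤ Real.log v := Real.log_nonneg hv
  have hs : Real.log v ≤ Real.sinh (Real.log v) := by
    rcases eq_or_lt_of_le hl with h | h
    · simp [← h]
    · exact le_of_lt (Real.self_lt_sinh_iff.mpr h)
  have heq : Real.sinh (Real.log v) = (v - 1 / v) / 2 := by
    rw [Real.sinh_eq, Real.exp_log hv0, Real.exp_neg, Real.exp_log hv0, one_div]
  linarith [hs.trans_eq heq]

/-- Trapezoid inequality: `log (x+1) - log x ≤ 1/(2x) + 1/(2(x+1))` for `x ≥ 1`. -/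
lemma aux_trapezoid {x : ℝ} (hx : 1 ≤ x) : Real.log (x + 1) - Real.log x ≤
    1 / (2 * x) + 1 / (2 * (x + 1)) := by
  have hx0 : 0 < x := lt_of_lt_of_le one_pos hx
  have hx1 : (0:ℝ) < x + 1 := by linarith
  set v : ℝ := Real.sqrt (x + 1) / Real.sqrt x with hv
  have hsx : 0 < Real.sqrt x := Real.sqrt_pos.mpr hx0
  have hsx1 : 0 < Real.sqrt (x + 1) := Real.sqrt_pos.mpr hx1
  have hvps : 1 ≤ v := by
    rw [hv, le_div_iff₀ hsx, one_mul]
    exact Real.sqrt_le_sqrt (by linarith)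
  have hlog : 2 * Real.log v = Real.log (x + 1) - Real.log x := by
    rw [hv, Real.log_div hsx1.ne' hsx.ne', Real.log_sqrt hx1.le, Real.log_sqrt hx0.le]
    ring
  have hval : v - 1 / v = 1 / Real.sqrt (x * (x + 1)) := by
    have h1 : 1 / v = Real.sqrt x / Real.sqrt (x + 1) := by rw [hv, one_div_div]
    rw [hv, h1, div_sub_div _ _ hsx.ne' hsx1.ne', Real.mul_self_sqrt hx1.le,
      Real.mul_self_sqrt hx0.le, ← Real.sqrt_mul hx0.le]
    norm_num
  have key := aux_two_log_le hvps
  rw [hlog, hval] at key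
  refine key.trans ?_
  have hwpos : 0 < Real.sqrt (x * (x + 1)) := Real.sqrt_pos.mpr (by positivity)
  have hw : (2 * x * (x + 1)) / (2 * x + 1) ≤ Real.sqrt (x * (x + 1)) := by
    rw [show (2 * x * (x + 1)) / (2 * x + 1) =
        Real.sqrt (((2 * x * (x + 1)) / (2 * x + 1)) ^ 2) by
      rw [Real.sqrt_sq (by positivity)]]
    apply Real.sqrt_le_sqrt
    rw [div_pow, div_le_iff₀ (by positivity)]
    nlinarith [sq_nonneg x]
  have h2 : 1 / Real.sqrt (x * (x + 1)) ≤ (2 * x + 1) / (2 * x * (x + 1)) := by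
    rw [div_le_div_iff₀ hwpos (by positivity)]
    calc 1 * (2 * x * (x + 1)) = ((2 * x * (x + 1)) / (2 * x + 1)) * (2 * x + 1) := by
          field_simp
      _ ≤ Real.sqrt (x * (x + 1)) * (2 * x + 1) :=
          mul_le_mul_of_nonneg_right hw (by positivity)
      _ = (2 * x + 1) * Real.sqrt (x * (x + 1)) := by ring
  refine h2.trans (le_of_eq ?_)
  field_simp
  ring

/-- Differentiability of `log ∘ Γ` at positive reals. -/
lemma aux_logGamma_diff {x : ℝ} (hx : 0 < x) :
    DifferentiableAt ℝ (Real.log ∘ Real.Gamma) x := by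
  refine (Real.differentiableAt_Gamma ?_).log (Real.Gamma_ne_zero ?_) <;>
    exact fun m => ne_of_gt (by have : (0:ℝ) ≤ m := Nat.cast_nonneg m; linarith)

/-- Recurrence for the log-derivative of `Γ`. -/
lemma aux_psi_rec {x : ℝ} (hx : 0 < x) :
    deriv (Real.log ∘ Real.Gamma) (x + 1) = deriv (Real.log ∘ Real.Gamma) x + 1 / x := by
  rw [← deriv_comp_add_const, one_div, ← Real.deriv_log,
    ← deriv_add (aux_logGamma_diff hx) (Real.differentiableAt_log hx.ne')]
  apply Filter.EventuallyEq.deriv_eq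
  filter_upwards [eventually_gt_nhds hx] with y hy
  simp only [Function.comp_apply, Real.Gamma_add_one hy.ne',
    Real.log_mul hy.ne' (Real.Gamma_pos_of_pos hy).ne', add_comm]
  rfl

/-- Digamma-type bound: `(log Γ)' s ≤ log s - 1/(2s) + 1/(2(s+n))` for `s ≥ 1`. -/
lemma aux_psi_bound (n : ℕ) : ∀ s : ℝ, 1 ≤ s →
    deriv (Real.log ∘ Real.Gamma) s ≤
      Real.log s - 1 / (2 * s) + 1 / (2 * (s + n)) := by
  induction n with
  | zero =>
    intro s hs
    have hs0 : 0 < s := lt_of_lt_of_le one_pos hs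
    have hbase : deriv (Real.log ∘ Real.Gamma) s ≤ Real.log s := by
      have hsl := Real.convexOn_log_Gamma.deriv_le_slope (Set.mem_Ioi.mpr hs0)
        (Set.mem_Ioi.mpr (by linarith : (0:ℝ) < s + 1)) (by linarith)
        (aux_logGamma_diff hs0)
      have hrec : (Real.log ∘ Real.Gamma) (s + 1)
          = (Real.log ∘ Real.Gamma) s + Real.log s := by
        simp only [Function.comp_apply, Real.Gamma_add_one hs0.ne',
          Real.log_mul hs0.ne' (Real.Gamma_pos_of_pos hs0).ne', add_comm]
      rw [slope_def_field, hrec] at hsl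
      calc deriv (Real.log ∘ Real.Gamma) s
          ≤ ((Real.log ∘ Real.Gamma) s + Real.log s - (Real.log ∘ Real.Gamma) s)
            / (s + 1 - s) := hsl
        _ = Real.log s := by ring_nf
    have h0 : ((0:ℕ):ℝ) = 0 := by norm_num
    rw [h0]
    have : 1 / (2 * (s + 0)) = 1 / (2 * s) := by norm_num
    rw [this]
    linarith
  | succ n ih =>
    intro s hs
    have hs0 : 0 < s := lt_of_lt_of_le one_pos hs
    have h1 : deriv (Real.log ∘ Real.Gamma) s
        = deriv (Real.log ∘ Real.Gamma) (s + 1) - 1 / s := by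
      rw [aux_psi_rec hs0]; ring
    have h2 := ih (s + 1) (by linarith)
    have h3 := aux_trapezoid hs
    have hcast : ((n + 1 : ℕ) : ℝ) = (n : ℝ) + 1 := by push_cast; ring
    rw [h1, hcast]
    have he : s + 1 + (n : ℝ) = s + ((n : ℝ) + 1) := by ring
    rw [he] at h2
    have hinv : 1 / s = 2 / (2 * s) := by
      rw [div_eq_div_iff hs0.ne' (by positivity)]; ring
    have hinv2 : 2 / (2 * s) = 2 * (1 / (2 * s)) := by ring
    linarith

/-- `(b - a)/b ≤ log b - log a` for `0 < a ≤ b`. -/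
lemma aux_log_diff_ge {a b : ℝ} (ha : 0 < a) (hab : a ≤ b) :
    (b - a) / b ≤ Real.log b - Real.log a := by
  have hb : 0 < b := lt_of_lt_of_le ha hab
  have h := Real.log_le_sub_one_of_pos (show 0 < a / b by positivity)
  rw [Real.log_div ha.ne' hb.ne'] at h
  have he : a / b - 1 = -((b - a) / b) := by field_simp; ring
  linarith [h.trans_eq he]

/-- Numeric bound: `log 8.5 - log π ≤ 0.99546`. -/
lemma aux_log_const : Real.log 8.5 - Real.log Real.pi ≤ 0.99546 := by
  have hpi : (3.141592 : ℝ) < Real.pi := Real.pi_gt_d6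
  rw [← Real.log_div (by norm_num) Real.pi_ne_zero,
    Real.log_le_iff_le_exp (by positivity)]
  have he1 : (2.7182818283 : ℝ) < Real.exp 1 := Real.exp_one_gt_d9
  have h2 : (0.99546 : ℝ) ≤ Real.exp (-0.00454) := by
    have := Real.add_one_le_exp (-0.00454 : ℝ); linarith
  have hexp2 : Real.exp (-0.00454) * Real.exp 1 = Real.exp 0.99546 := by
    rw [← Real.exp_add]; norm_num
  have hfinal : (2.7182818283 : ℝ) * 0.99546 ≤ Real.exp 0.99546 := by
    rw [← hexp2]
    nlinarith [Real.exp_pos (-0.00454 : ℝ)]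
  rw [div_le_iff₀ Real.pi_pos]
  nlinarith [Real.exp_pos (0.99546:ℝ)]

/-- The rational-function certificate inequality. -/
lemma aux_rat {t : ℝ} (ht : 310 ≤ t) :
    (0.99546 : ℝ) ≤ 13/8/(t + 29/8) + 13/8/(t + 21/4) + 13/8/(t + 55/8) + 13/8/(t + 17/2)
      + t/(t + 17/2) + 1/(2*(t + 2)) - 1/(2*(t + 2 + 1000000)) := by
  have h1 : (0:ℝ) < t + 29/8 := by linarith
  have h2 : (0:ℝ) < t + 21/4 := by linarith
  have h3 : (0:ℝ) < t + 55/8 := by linarith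
  have h4 : (0:ℝ) < t + 17/2 := by linarith
  have h5 : (0:ℝ) < t + 2 := by linarith
  have h6 : (0:ℝ) < t + 2 + 1000000 := by linarith
  rw [← sub_nonneg]
  obtain ⟨u, hu0, rfl⟩ : ∃ u : ℝ, 0 ≤ u ∧ 310 + u = t := ⟨t - 310, by linarith, by ring⟩
  have key : 13/8/(310 + u + 29/8) + 13/8/(310 + u + 21/4) + 13/8/(310 + u + 55/8)
      + 13/8/(310 + u + 17/2)
      + (310 + u)/(310 + u + 17/2) + 1/(2*(310 + u + 2)) - 1/(2*(310 + u + 2 + 1000000)) - 0.99546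
      = ((5156799882045451497/20000) + (69305599327871122567/400000) * u
        + (14095006922586034861/6400000) * u^2 + (6771854880083371/640000) * u^3
        + (3622269426397/160000) * u^4 + (909314531/50000) * u^5 + (227/12500) * u^6)
        / ((310 + u + 29/8) * (310 + u + 21/4) * (310 + u + 55/8) * (310 + u + 17/2)
          * (2*(310 + u + 2)) * (2*(310 + u + 2 + 1000000))) := by
    field_simp
    ring
  rw [key]
  apply div_nonneg
  · have h2' := pow_nonneg hu0 2
    have h3' := pow_nonneg hu0 3
    have h4' := pow_nonneg hu0 4
    have h5' := pow_nonneg hu0 5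
    have h6' := pow_nonneg hu0 6
    positivity
  · positivity

theorem log_phi_monotone :
    MonotoneOn
      (fun t : ℝ =>
        Real.log ((Real.pi / 8.5 * (t + 8.5)) ^ t / Real.Gamma (t + 2)))
      (Set.Ici (310 : ℝ)) := by
  have hcpos : (0:ℝ) < Real.pi / 8.5 := by positivity
  set c : ℝ := Real.pi / 8.5 with hc
  set g : ℝ → ℝ := fun t => t * Real.log (c * (t + 8.5)) - Real.log (Real.Gamma (t + 2))
    with hg
  -- `g` has an explicit derivative everywhere on `[310, ∞)`
  have hHasDeriv : ∀ t : ℝ, 310 ≤ t → HasDerivAt g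
      (1 * Real.log (c * (t + 8.5)) + t * ((c * (t + 8.5))⁻¹ * (c * 1))
        - deriv (Real.log ∘ Real.Gamma) (t + 2) * 1) t := by
    intro t ht
    have hb : (0:ℝ) < c * (t + 8.5) := by
      apply mul_pos hcpos; linarith
    have h0 : HasDerivAt (fun s : ℝ => s + 8.5) 1 t := (hasDerivAt_id t).add_const 8.5
    have h1 : HasDerivAt (fun s : ℝ => c * (s + 8.5)) (c * 1) t := h0.const_mul c
    have h2 : HasDerivAt (fun s : ℝ => Real.log (c * (s + 8.5)))
        ((c * (t + 8.5))⁻¹ * (c * 1)) t := by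
          have := (Real.hasDerivAt_log hb.ne').comp t h1; exact this
    have h3 : HasDerivAt (fun s : ℝ => s * Real.log (c * (s + 8.5)))
        (1 * Real.log (c * (t + 8.5)) + t * ((c * (t + 8.5))⁻¹ * (c * 1))) t :=
      (hasDerivAt_id t).mul h2
    have h4 : HasDerivAt (fun s : ℝ => s + 2) 1 t := (hasDerivAt_id t).add_const 2
    have h5 : HasDerivAt (Real.log ∘ Real.Gamma)
        (deriv (Real.log ∘ Real.Gamma) (t + 2)) (t + 2) :=
      (aux_logGamma_diff (by linarith : (0:ℝ) < t + 2)).hasDerivAt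
    have h6 : HasDerivAt (fun s : ℝ => Real.log (Real.Gamma (s + 2)))
        (deriv (Real.log ∘ Real.Gamma) (t + 2) * 1) t := by
          have := h5.comp t h4; exact this
    exact h3.sub h6
  have hmono : MonotoneOn g (Set.Ici (310 : ℝ)) := by
    apply monotoneOn_of_deriv_nonneg (convex_Ici _)
    · intro t ht
      exact ((hHasDeriv t ht).differentiableAt).continuousAt.continuousWithinAt
    · intro t ht
      rw [interior_Ici] at ht
      exact ((hHasDeriv t (le_of_lt ht)).differentiableAt).differentiableWithinAt
    · intro t ht
      rw [interior_Ici] at ht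
      have ht' : (310:ℝ) ≤ t := le_of_lt ht
      rw [(hHasDeriv t ht').deriv]
      -- bound the digamma term
      have hpsi := aux_psi_bound 1000000 (t + 2) (by linarith)
      have hcast : ((1000000 : ℕ) : ℝ) = 1000000 := by norm_num
      rw [hcast] at hpsi
      -- split the log difference into four pieces
      have l1 := aux_log_diff_ge (show (0:ℝ) < t + 2 by linarith)
        (show t + 2 ≤ t + 29/8 by linarith)
      have l2 := aux_log_diff_ge (show (0:ℝ) < t + 29/8 by linarith)
        (show t + 29/8 ≤ t + 21/4 by linarith)
      have l3 := aux_log_diff_ge (show (0:ℝ) < t + 21/4 by linarith)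
        (show t + 21/4 ≤ t + 55/8 by linarith)
      have l4 := aux_log_diff_ge (show (0:ℝ) < t + 55/8 by linarith)
        (show t + 55/8 ≤ t + 17/2 by linarith)
      rw [show t + 29/8 - (t + 2) = 13/8 by ring] at l1
      rw [show t + 21/4 - (t + 29/8) = 13/8 by ring] at l2
      rw [show t + 55/8 - (t + 21/4) = 13/8 by ring] at l3
      rw [show t + 17/2 - (t + 55/8) = 13/8 by ring] at l4
      -- rewrite the logarithm of the product
      have hb : (0:ℝ) < t + 8.5 := by linarith
      have hlogsplit : Real.log (c * (t + 8.5))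
          = Real.log Real.pi - Real.log 8.5 + Real.log (t + 8.5) := by
        rw [hc, Real.log_mul (by positivity) hb.ne',
          Real.log_div Real.pi_ne_zero (by norm_num)]
      have hfrac : t * ((c * (t + 8.5))⁻¹ * (c * 1)) = t / (t + 8.5) := by
        field_simp
      rw [hlogsplit, hfrac]
      have h85 : (8.5:ℝ) = 17/2 := by norm_num
      have hK := aux_log_const
      have hR := aux_rat ht'
      have h175 : t + (8.5:ℝ) = t + 17/2 := by norm_num
      rw [h175]
      have h2N : t + 2 + 1000000 = t + 1000002 := by ring
      linarith
  have hEq : Set.EqOn g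
      (fun t : ℝ => Real.log ((Real.pi / 8.5 * (t + 8.5)) ^ t / Real.Gamma (t + 2)))
      (Set.Ici (310 : ℝ)) := by
    intro t ht
    have ht' : (310:ℝ) ≤ t := ht
    have hb : (0:ℝ) < c * (t + 8.5) := by
      apply mul_pos hcpos; linarith
    have hG : (0:ℝ) < Real.Gamma (t + 2) := Real.Gamma_pos_of_pos (by linarith)
    simp only [hg]
    rw [← hc, Real.log_div (Real.rpow_pos_of_pos hb t).ne' hG.ne', Real.log_rpow hb]
  exact hmono.congr hEq
end

section
/- For every integer n ≥ 1, Γ(2 + n/2) < (π(n + 17)/17)^{n/2}. -/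
open Real

/-- Padé lower bound for log. -/
lemma log_pade {u : ℝ} (hu : 0 ≤ u) : 2*u/(2+u) ≤ Real.log (1+u) := by
  have hd : ∀ t : ℝ, 0 < t →
      HasDerivAt (fun t : ℝ => Real.log (1+t) - 2*t/(2+t)) (1/(1+t) - 4/(2+t)^2) t := by
    intro t ht
    have h1 : HasDerivAt (fun t : ℝ => 1+t) 1 t := by simpa using (hasDerivAt_id t).const_add 1
    have h2 : HasDerivAt (fun t : ℝ => Real.log (1+t)) (1/(1+t)) t := by
      have := (Real.hasDerivAt_log (by linarith : (1:ℝ)+t ≠ 0)).comp t h1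
      simpa [one_div, Function.comp_def] using this
    have h3 : HasDerivAt (fun t : ℝ => 2*t) 2 t := by simpa using (hasDerivAt_id t).const_mul 2
    have h4 : HasDerivAt (fun t : ℝ => 2+t) 1 t := by simpa using (hasDerivAt_id t).const_add 2
    have h5 : HasDerivAt (fun t : ℝ => 2*t/(2+t)) ((2*(2+t) - 2*t*1)/(2+t)^2) t :=
      h3.div h4 (by linarith)
    have hne : (1:ℝ)+t ≠ 0 := by linarith
    have hne2 : (2:ℝ)+t ≠ 0 := by linarith
    refine (h2.sub h5).congr_deriv ?_
    ring
  have key : MonotoneOn (fun t : ℝ => Real.log (1+t) - 2*t/(2+t)) (Set.Ici 0) := by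
    apply monotoneOn_of_deriv_nonneg (convex_Ici 0)
    · apply ContinuousOn.sub
      · apply ContinuousOn.log (by fun_prop)
        intro t ht
        simp only [Set.mem_Ici] at ht
        positivity
      · apply ContinuousOn.div (by fun_prop) (by fun_prop)
        intro t ht
        simp only [Set.mem_Ici] at ht
        positivity
    · intro t ht
      simp only [interior_Ici, Set.mem_Ioi] at ht
      exact ((hd t ht).differentiableAt).differentiableWithinAt
    · intro t ht
      simp only [interior_Ici, Set.mem_Ioi] at ht
      rw [(hd t ht).deriv]
      rw [sub_nonneg, div_le_div_iff₀ (by positivity) (by positivity)]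
      nlinarith [sq_nonneg t]
  have h0 := key (Set.self_mem_Ici) (Set.mem_Ici.2 hu) hu
  simp only [Real.log_one] at h0
  norm_num at h0
  linarith

/-- tangent line bound for log at e^j with rational approximation of e. -/
lemma log_tangent {x : ℝ} (hx : 0 < x) (j : ℕ) :
    Real.log x ≤ j + x/(2.718:ℝ)^j - 1 := by
  have he : (2.718:ℝ) ≤ Real.exp 1 := by
    have := Real.exp_one_gt_d9; norm_num at this ⊢; linarith
  have hE : (2.718:ℝ)^j ≤ Real.exp j := by
    calc (2.718:ℝ)^j ≤ (Real.exp 1)^j := pow_le_pow_left₀ (by norm_num) he j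
    _ = Real.exp j := by rw [← Real.exp_nat_mul]; norm_num
  have h1 : Real.log x - j = Real.log (x / Real.exp j) := by
    rw [Real.log_div hx.ne' (Real.exp_ne_zero _), Real.log_exp]
  have h2 : Real.log (x / Real.exp j) ≤ x / Real.exp j - 1 :=
    Real.log_le_sub_one_of_pos (by positivity)
  have h3 : x / Real.exp j ≤ x / (2.718:ℝ)^j := by
    gcongr
  linarith

lemma log_const_ge : (0.00464:ℝ) ≤ Real.log (2 * Real.exp 1 * Real.pi / 17) := by
  have he := Real.exp_one_gt_d9
  have hp := Real.pi_gt_d6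
  have hx : (0:ℝ) < 2 * Real.exp 1 * Real.pi / 17 := by positivity
  have h := Real.one_sub_inv_le_log_of_pos hx
  have h2 : (2 * Real.exp 1 * Real.pi / 17)⁻¹ ≤ 0.99536 := by
    rw [inv_le_comm₀ (by positivity) (by norm_num)]
    rw [le_div_iff₀ (by norm_num)]
    nlinarith
  linarith

lemma factorial_bound (k : ℕ) : ((Nat.factorial (k+1)) : ℝ) ≤
    Real.exp 1 * Real.sqrt (k+1) * (((k:ℝ)+1)/Real.exp 1)^(k+1) := by
  have h := Stirling.stirlingSeq'_antitone (Nat.zero_le k)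
  simp only [Function.comp_apply, Nat.succ_eq_add_one, Nat.zero_add] at h
  rw [Stirling.stirlingSeq_one] at h
  have hk1 : (0:ℝ) < (k:ℝ)+1 := by positivity
  have hden : (0:ℝ) < Real.sqrt (2*((k:ℝ)+1)) * (((k:ℝ)+1)/Real.exp 1)^(k+1) := by
    have : (0:ℝ) < Real.sqrt (2*((k:ℝ)+1)) := Real.sqrt_pos.2 (by positivity)
    positivity
  have hdef : Stirling.stirlingSeq (k+1) =
      ((Nat.factorial (k+1)) : ℝ) / (Real.sqrt (2*((k:ℝ)+1)) * (((k:ℝ)+1)/Real.exp 1)^(k+1)) := by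
    rw [Stirling.stirlingSeq]
    push_cast
    ring_nf
  rw [hdef, div_le_iff₀ hden] at h
  calc ((Nat.factorial (k+1)) : ℝ) ≤ Real.exp 1 / Real.sqrt 2 * (Real.sqrt (2*((k:ℝ)+1)) * (((k:ℝ)+1)/Real.exp 1)^(k+1)) := h
  _ = Real.exp 1 * Real.sqrt (k+1) * (((k:ℝ)+1)/Real.exp 1)^(k+1) := by
      rw [Real.sqrt_mul (by norm_num : (0:ℝ) ≤ 2)]
      have h2 : Real.sqrt 2 ≠ 0 := by positivity
      have : ((k:ℕ)+1 : ℝ) = (k:ℝ)+1 := by push_cast; ring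
      field_simp

lemma log_factorial_le (k : ℕ) : Real.log ((Nat.factorial (k+1)) : ℝ) ≤
    1 + Real.log ((k:ℝ)+1)/2 + ((k:ℝ)+1)*(Real.log ((k:ℝ)+1) - 1) := by
  have h := factorial_bound k
  have hpos : (0:ℝ) < ((Nat.factorial (k+1)) : ℝ) := by
    exact_mod_cast Nat.factorial_pos (k+1)
  have hk1 : (0:ℝ) < (k:ℝ)+1 := by positivity
  have hs : (0:ℝ) < Real.sqrt ((k:ℝ)+1) := Real.sqrt_pos.2 hk1
  calc Real.log ((Nat.factorial (k+1)) : ℝ)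
      ≤ Real.log (Real.exp 1 * Real.sqrt (k+1) * (((k:ℝ)+1)/Real.exp 1)^(k+1)) := by
        exact Real.log_le_log hpos h
  _ = 1 + Real.log ((k:ℝ)+1)/2 + ((k:ℝ)+1)*(Real.log ((k:ℝ)+1) - 1) := by
        rw [Real.log_mul (by positivity) (by positivity),
            Real.log_mul (by positivity) (by positivity),
            Real.log_pow, Real.log_div hk1.ne' (Real.exp_ne_zero 1),
            Real.log_exp, Real.log_sqrt hk1.le]
        push_cast
        ring

lemma gamma_half_sq {x : ℝ} (hx : 0 < x) :
    Real.Gamma (x + 1/2)^2 ≤ Real.Gamma x * Real.Gamma (x+1) := by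
  have hc := Real.convexOn_log_Gamma.2 (Set.mem_Ioi.2 hx)
    (Set.mem_Ioi.2 (by linarith : (0:ℝ) < x+1)) (by norm_num : (0:ℝ) ≤ 1/2)
    (by norm_num : (0:ℝ) ≤ 1/2) (by norm_num)
  simp only [Function.comp_apply, smul_eq_mul] at hc
  have hmid : (1/2 : ℝ) * x + (1/2 : ℝ) * (x+1) = x + 1/2 := by ring
  rw [hmid] at hc
  have g1 : 0 < Real.Gamma x := Real.Gamma_pos_of_pos hx
  have g2 : 0 < Real.Gamma (x+1) := Real.Gamma_pos_of_pos (by linarith)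
  have g3 : 0 < Real.Gamma (x+1/2) := Real.Gamma_pos_of_pos (by linarith)
  have h2 : Real.log (Real.Gamma (x+1/2)^2) ≤ Real.log (Real.Gamma x * Real.Gamma (x+1)) := by
    rw [Real.log_pow, Real.log_mul g1.ne' g2.ne']
    push_cast
    linarith
  have := Real.exp_le_exp.2 h2
  rwa [Real.exp_log (by positivity), Real.exp_log (by positivity)] at this

lemma core_even {x : ℝ} (hx : 1 ≤ x) :
    3 * Real.log (x+1) < 0.00928*x + 30*x/(2*x+9.5) := by
  have h95 : (0:ℝ) < 2*x+9.5 := by linarith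
  have hx1 : (0:ℝ) < x+1 := by linarith
  have hsplit : 30*x/(2*x+9.5) = 15 - 142.5/(2*x+9.5) := by field_simp; ring
  rw [hsplit]
  rcases le_or_gt x 2 with hb | hb
  · have ht := log_tangent hx1 1
    push_cast at ht
    have hkey : 142.5/(2*x+9.5) < 0.00928*x + 15 - 3*(1 + (x+1)/(2.718:ℝ)^1 - 1) := by
      rw [div_lt_iff₀ h95]
      norm_num
      nlinarith [mul_nonneg (by linarith : (0:ℝ) ≤ x-1) (by linarith : (0:ℝ) ≤ 2-x)]
    linarith
  rcases le_or_gt x 4 with hb2 | hb2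
  · have ht := log_tangent hx1 2
    push_cast at ht
    have hkey : 142.5/(2*x+9.5) < 0.00928*x + 15 - 3*(2 + (x+1)/(2.718:ℝ)^2 - 1) := by
      rw [div_lt_iff₀ h95]
      norm_num
      nlinarith [mul_nonneg (by linarith : (0:ℝ) ≤ x-2) (by linarith : (0:ℝ) ≤ 4-x)]
    linarith
  rcases le_or_gt x 9 with hb3 | hb3
  · have ht := log_tangent hx1 3
    push_cast at ht
    have hkey : 142.5/(2*x+9.5) < 0.00928*x + 15 - 3*(3 + (x+1)/(2.718:ℝ)^3 - 1) := by
      rw [div_lt_iff₀ h95]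
      norm_num
      nlinarith [mul_nonneg (by linarith : (0:ℝ) ≤ x-4) (by linarith : (0:ℝ) ≤ 9-x)]
    linarith
  rcases le_or_gt x 25 with hb4 | hb4
  · have ht := log_tangent hx1 4
    push_cast at ht
    have hkey : 142.5/(2*x+9.5) < 0.00928*x + 15 - 3*(4 + (x+1)/(2.718:ℝ)^4 - 1) := by
      rw [div_lt_iff₀ h95]
      norm_num
      nlinarith [mul_nonneg (by linarith : (0:ℝ) ≤ x-9) (by linarith : (0:ℝ) ≤ 25-x)]
    linarith
  rcases le_or_gt x 230 with hb5 | hb5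
  · have ht := log_tangent hx1 5
    push_cast at ht
    have hkey : 142.5/(2*x+9.5) < 0.00928*x + 15 - 3*(5 + (x+1)/(2.718:ℝ)^5 - 1) := by
      rw [div_lt_iff₀ h95]
      norm_num
      nlinarith [mul_nonneg (by linarith : (0:ℝ) ≤ x-25) (by linarith : (0:ℝ) ≤ 230-x)]
    linarith
  · have ht := log_tangent hx1 6
    push_cast at ht
    have hkey : 142.5/(2*x+9.5) < 0.00928*x + 15 - 3*(6 + (x+1)/(2.718:ℝ)^6 - 1) := by
      rw [div_lt_iff₀ h95]
      norm_num
      nlinarith [sq_nonneg (x-230), (by linarith : (0:ℝ) ≤ x-230)]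
    linarith

lemma core_odd {x : ℝ} (hx : 1 ≤ x) :
    2*Real.log (x+1) + Real.log (x+2) + 1 < 0.00928*x + 0.00464 + (16*x+8)/(x+5) := by
  have h5 : (0:ℝ) < x+5 := by linarith
  have hx1 : (0:ℝ) < x+1 := by linarith
  have hx2 : (0:ℝ) < x+2 := by linarith
  have hsplit : (16*x+8)/(x+5) = 16 - 72/(x+5) := by field_simp; ring
  rw [hsplit]
  rcases le_or_gt x 2 with hb | hb
  · have ht1 := log_tangent hx1 1
    have ht2 := log_tangent hx2 1
    push_cast at ht1 ht2
    have hkey : 72/(x+5) < 0.00928*x + 0.00464 + 16 - 1 -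
        (2*(1 + (x+1)/(2.718:ℝ)^1 - 1) + (1 + (x+2)/(2.718:ℝ)^1 - 1)) := by
      rw [div_lt_iff₀ h5]
      norm_num
      nlinarith [mul_nonneg (by linarith : (0:ℝ) ≤ x-1) (by linarith : (0:ℝ) ≤ 2-x)]
    linarith
  rcases le_or_gt x 4 with hb2 | hb2
  · have ht1 := log_tangent hx1 2
    have ht2 := log_tangent hx2 2
    push_cast at ht1 ht2
    have hkey : 72/(x+5) < 0.00928*x + 0.00464 + 16 - 1 -
        (2*(2 + (x+1)/(2.718:ℝ)^2 - 1) + (2 + (x+2)/(2.718:ℝ)^2 - 1)) := by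
      rw [div_lt_iff₀ h5]
      norm_num
      nlinarith [mul_nonneg (by linarith : (0:ℝ) ≤ x-2) (by linarith : (0:ℝ) ≤ 4-x)]
    linarith
  rcases le_or_gt x 9 with hb3 | hb3
  · have ht1 := log_tangent hx1 3
    have ht2 := log_tangent hx2 3
    push_cast at ht1 ht2
    have hkey : 72/(x+5) < 0.00928*x + 0.00464 + 16 - 1 -
        (2*(3 + (x+1)/(2.718:ℝ)^3 - 1) + (3 + (x+2)/(2.718:ℝ)^3 - 1)) := by
      rw [div_lt_iff₀ h5]
      norm_num
      nlinarith [mul_nonneg (by linarith : (0:ℝ) ≤ x-4) (by linarith : (0:ℝ) ≤ 9-x)]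
    linarith
  rcases le_or_gt x 25 with hb4 | hb4
  · have ht1 := log_tangent hx1 4
    have ht2 := log_tangent hx2 4
    push_cast at ht1 ht2
    have hkey : 72/(x+5) < 0.00928*x + 0.00464 + 16 - 1 -
        (2*(4 + (x+1)/(2.718:ℝ)^4 - 1) + (4 + (x+2)/(2.718:ℝ)^4 - 1)) := by
      rw [div_lt_iff₀ h5]
      norm_num
      nlinarith [mul_nonneg (by linarith : (0:ℝ) ≤ x-9) (by linarith : (0:ℝ) ≤ 25-x)]
    linarith
  rcases le_or_gt x 230 with hb5 | hb5
  · have ht1 := log_tangent hx1 5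
    have ht2 := log_tangent hx2 5
    push_cast at ht1 ht2
    have hkey : 72/(x+5) < 0.00928*x + 0.00464 + 16 - 1 -
        (2*(5 + (x+1)/(2.718:ℝ)^5 - 1) + (5 + (x+2)/(2.718:ℝ)^5 - 1)) := by
      rw [div_lt_iff₀ h5]
      norm_num
      nlinarith [mul_nonneg (by linarith : (0:ℝ) ≤ x-25) (by linarith : (0:ℝ) ≤ 230-x)]
    linarith
  · have ht1 := log_tangent hx1 6
    have ht2 := log_tangent hx2 6
    push_cast at ht1 ht2
    have hkey : 72/(x+5) < 0.00928*x + 0.00464 + 16 - 1 -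
        (2*(6 + (x+1)/(2.718:ℝ)^6 - 1) + (6 + (x+2)/(2.718:ℝ)^6 - 1)) := by
      rw [div_lt_iff₀ h5]
      norm_num
      nlinarith [sq_nonneg (x-230), (by linarith : (0:ℝ) ≤ x-230)]
    linarith

lemma even_main (m : ℕ) (hm : 1 ≤ m) :
    ((Nat.factorial (m+1)):ℝ) < (Real.pi*(2*(m:ℝ)+17)/17)^m := by
  set x : ℝ := (m:ℝ) with hxdef
  have hx : 1 ≤ x := by rw [hxdef]; exact_mod_cast hm
  have hx1 : (0:ℝ) < x+1 := by linarith
  have hpi := Real.pi_pos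
  have hbase : (0:ℝ) < Real.pi*(2*x+17)/17 := by positivity
  have hfacpos : (0:ℝ) < ((Nat.factorial (m+1)):ℝ) := by exact_mod_cast Nat.factorial_pos (m+1)
  have hP : 15/(2*x+9.5) ≤ Real.log (1+7.5/(x+1)) := by
    have h := log_pade (u := 7.5/(x+1)) (by positivity)
    have heq : 2*(7.5/(x+1))/(2+7.5/(x+1)) = 15/(2*x+9.5) := by
      rw [div_eq_div_iff (by positivity) (by positivity)]
      field_simp
      ring
    linarith [heq ▸ h]
  have hlogbase : x * Real.log (Real.pi*(2*x+17)/17) =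
      x * Real.log (2*Real.exp 1*Real.pi/17) + x * Real.log (x+1)
        + x * Real.log (1+7.5/(x+1)) - x := by
    have h1 : Real.pi*(2*x+17)/17 =
        (2*Real.exp 1*Real.pi/17) * ((x+1)*(1+7.5/(x+1)) / Real.exp 1) := by
      field_simp
      ring
    rw [h1, Real.log_mul (by positivity) (by positivity),
        Real.log_div (by positivity) (Real.exp_ne_zero 1),
        Real.log_mul (by positivity) (by positivity), Real.log_exp]
    ring
  have hL := log_factorial_le m
  have hcore := core_even hx
  have e1 : x*0.00464 ≤ x*Real.log (2*Real.exp 1*Real.pi/17) :=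
    mul_le_mul_of_nonneg_left log_const_ge (by linarith)
  have e2 : x*(15/(2*x+9.5)) ≤ x*Real.log (1+7.5/(x+1)) :=
    mul_le_mul_of_nonneg_left hP (by linarith)
  have e3 : x*(15/(2*x+9.5)) = 30*x/(2*x+9.5)/2 := by ring
  have hgoal_log : Real.log ((Nat.factorial (m+1)):ℝ) <
      x * Real.log (Real.pi*(2*x+17)/17) := by
    rw [hlogbase]
    nlinarith [hL, hcore, e1, e2, e3]
  rw [← Real.log_pow] at hgoal_log
  exact (Real.log_lt_log_iff hfacpos (by positivity)).mp hgoal_log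

lemma odd_main (m : ℕ) (hm : 1 ≤ m) :
    ((Nat.factorial (m+1)):ℝ)^2 * ((m:ℝ)+2) < (Real.pi*(2*(m:ℝ)+1+17)/17)^(2*m+1) := by
  set x : ℝ := (m:ℝ) with hxdef
  have hx : 1 ≤ x := by rw [hxdef]; exact_mod_cast hm
  have hx1 : (0:ℝ) < x+1 := by linarith
  have hpi := Real.pi_pos
  have hbase : (0:ℝ) < Real.pi*(2*x+1+17)/17 := by positivity
  have hfacpos : (0:ℝ) < ((Nat.factorial (m+1)):ℝ) := by exact_mod_cast Nat.factorial_pos (m+1)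
  have hP : 8/(x+5) ≤ Real.log (1+8/(x+1)) := by
    have h := log_pade (u := 8/(x+1)) (by positivity)
    have heq : 2*(8/(x+1))/(2+8/(x+1)) = 8/(x+5) := by
      rw [div_eq_div_iff (by positivity) (by positivity)]
      field_simp
      ring
    linarith [heq ▸ h]
  have hlogbase : (2*x+1) * Real.log (Real.pi*(2*x+1+17)/17) =
      (2*x+1) * Real.log (2*Real.exp 1*Real.pi/17) + (2*x+1) * Real.log (x+1)
        + (2*x+1) * Real.log (1+8/(x+1)) - (2*x+1) := by
    have h1 : Real.pi*(2*x+1+17)/17 =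
        (2*Real.exp 1*Real.pi/17) * ((x+1)*(1+8/(x+1)) / Real.exp 1) := by
      field_simp
      ring
    rw [h1, Real.log_mul (by positivity) (by positivity),
        Real.log_div (by positivity) (Real.exp_ne_zero 1),
        Real.log_mul (by positivity) (by positivity), Real.log_exp]
    ring
  have hL := log_factorial_le m
  have hcore := core_odd hx
  have e1 : (2*x+1)*0.00464 ≤ (2*x+1)*Real.log (2*Real.exp 1*Real.pi/17) :=
    mul_le_mul_of_nonneg_left log_const_ge (by linarith)
  have e2 : (2*x+1)*(8/(x+5)) ≤ (2*x+1)*Real.log (1+8/(x+1)) :=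
    mul_le_mul_of_nonneg_left hP (by linarith)
  have e3 : (2*x+1)*(8/(x+5)) = (16*x+8)/(x+5) := by ring
  have hgoal_log : Real.log (((Nat.factorial (m+1)):ℝ)^2 * (x+2)) <
      (2*x+1) * Real.log (Real.pi*(2*x+1+17)/17) := by
    rw [Real.log_mul (by positivity) (by positivity), Real.log_pow, hlogbase]
    push_cast
    nlinarith [hL, hcore, e1, e2, e3]
  have hrw : ((2*m+1 : ℕ):ℝ) * Real.log (Real.pi*(2*x+1+17)/17)
      = (2*x+1) * Real.log (Real.pi*(2*x+1+17)/17) := by push_cast; ring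
  rw [← hrw, ← Real.log_pow] at hgoal_log
  exact (Real.log_lt_log_iff (by positivity) (by positivity)).mp hgoal_log

theorem gamma_lt_pow (n : ℕ) (hn : 1 ≤ n) :
    Real.Gamma (2 + (n : ℝ) / 2) < (Real.pi * ((n : ℝ) + 17) / 17) ^ ((n : ℝ) / 2) := by
  have hpi := Real.pi_pos
  rcases Nat.even_or_odd n with ⟨m, hmm⟩ | ⟨m, hmm⟩
  · -- n = m + m
    subst hmm
    have hm : 1 ≤ m := by omega
    have hcast : ((m+m : ℕ):ℝ) = 2*(m:ℝ) := by push_cast; ring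
    rw [hcast]
    have h2 : (2:ℝ)*(m:ℝ)/2 = (m:ℝ) := by ring
    rw [h2]
    have harg : (2:ℝ) + (m:ℝ) = ((m+1:ℕ):ℝ) + 1 := by push_cast; ring
    rw [harg, Real.Gamma_nat_eq_factorial, Real.rpow_natCast]
    have := even_main m hm
    convert this using 2
  · -- n = 2m+1
    subst hmm
    rcases Nat.eq_zero_or_pos m with rfl | hm
    · -- n = 1
      norm_num
      have h32 : Real.Gamma ((3/2:ℝ) + 1) = (3/2) * Real.Gamma (3/2) := by
        rw [Real.Gamma_add_one (by norm_num)]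
      have h12 : Real.Gamma ((3/2:ℝ)) = (1/2) * Real.Gamma (1/2) := by
        rw [show (3/2:ℝ) = 1/2 + 1 by norm_num, Real.Gamma_add_one (by norm_num)]
      rw [show (5/2:ℝ) = 3/2 + 1 by norm_num, h32, h12, Real.Gamma_one_half_eq]
      have hrhs : (Real.pi * 18 / 17) ^ ((1:ℝ)/2) = Real.sqrt (Real.pi * 18/17) := by
        rw [Real.sqrt_eq_rpow]
      rw [hrhs]
      have hl : (3/2:ℝ) * ((1/2) * Real.sqrt Real.pi) = Real.sqrt (9*Real.pi/16) := by
        rw [show (9*Real.pi/16:ℝ) = (3/4)^2*Real.pi by ring, Real.sqrt_mul (by positivity),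
          Real.sqrt_sq (by norm_num)]
        ring
      rw [hl]
      apply Real.sqrt_lt_sqrt (by positivity)
      nlinarith
    · -- n = 2m+1, m ≥ 1
      have hcast : ((2*m+1 : ℕ):ℝ) = 2*(m:ℝ)+1 := by push_cast; ring
      rw [hcast]
      have hbase : (0:ℝ) < Real.pi * (2*(m:ℝ)+1+17)/17 := by positivity
      set B : ℝ := Real.pi * (2*(m:ℝ)+1+17)/17 with hBdef
      set r : ℝ := (2*(m:ℝ)+1)/2 with hrdef
      have hrB : (0:ℝ) ≤ B ^ r := Real.rpow_nonneg hbase.le r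
      have harg : (2:ℝ) + (2*(m:ℝ)+1)/2 = ((m:ℝ)+2) + 1/2 := by ring
      rw [harg]
      have hkey : (B ^ r)^2 = B^(2*m+1) := by
        rw [← Real.rpow_natCast (B^r) 2, ← Real.rpow_mul hbase.le]
        rw [show r*(2:ℕ) = ((2*m+1:ℕ):ℝ) by rw [hrdef]; push_cast; ring]
        rw [Real.rpow_natCast]
      have hsq : Real.Gamma (((m:ℝ)+2) + 1/2)^2 < (B ^ r)^2 := by
        rw [hkey]
        have hconv := gamma_half_sq (x := (m:ℝ)+2) (by positivity)
        have hg1 : Real.Gamma ((m:ℝ)+2) = ((Nat.factorial (m+1)):ℝ) := by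
          rw [show (m:ℝ)+2 = ((m+1:ℕ):ℝ) + 1 by push_cast; ring, Real.Gamma_nat_eq_factorial]
        have hg2 : Real.Gamma ((m:ℝ)+2+1) = ((Nat.factorial (m+2)):ℝ) := by
          rw [show (m:ℝ)+2+1 = ((m+2:ℕ):ℝ) + 1 by push_cast; ring, Real.Gamma_nat_eq_factorial]
        have hfs : ((Nat.factorial (m+2)):ℝ) = ((m:ℝ)+2) * ((Nat.factorial (m+1)):ℝ) := by
          rw [show m+2 = (m+1)+1 from rfl, Nat.factorial_succ]
          push_cast
          ring
        have hchain : Real.Gamma (((m:ℝ)+2) + 1/2)^2 ≤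
            ((Nat.factorial (m+1)):ℝ)^2 * ((m:ℝ)+2) := by
          calc Real.Gamma (((m:ℝ)+2) + 1/2)^2 ≤ Real.Gamma ((m:ℝ)+2) * Real.Gamma ((m:ℝ)+2+1) := hconv
          _ = ((Nat.factorial (m+1)):ℝ)^2 * ((m:ℝ)+2) := by rw [hg1, hg2, hfs]; ring
        exact lt_of_le_of_lt hchain (odd_main m hm)
      exact lt_of_pow_lt_pow_left₀ 2 hrB hsq
end
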